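/- arXiv:2004.06934 — 4 statements merged into one kernel-verified Lean document; each statement's English description precedes it below -/
import Mathlib

section
/- Let A_1, …, A_n be formulas such that IL(M) does not prove ¬A_i for any i. Then IL(M) proves (Diamond A_1 ∧ … ∧ Diamond A_n) → (A ▷ B) if and only if IL(M) proves A ▷ B. -/
/-- Formulas of interpretability logic: ⊥, variables, →, Box, ▷. -/
inductive Formula : Type
  | bot : Formula
  | var : ℕ → Formula
  | impl : Formula → Formula → Formula
  | box : Formula → Formula
  | rhd : Formula → Formula → Formula

namespace Formula
def neg (φ : Formula) : Formula := φ.impl bot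
def conj (φ ψ : Formula) : Formula := (φ.impl ψ.neg).neg
def disj (φ ψ : Formula) : Formula := φ.neg.impl ψ
def top : Formula := neg bot
def dia (φ : Formula) : Formula := ((box φ.neg)).neg
end Formula

open Formula

/-- Hilbert-style provability in IL extended with a set `Ax` of extra axioms. -/
inductive ILProof (Ax : Set Formula) : Formula → Prop
  | ax {φ} : φ ∈ Ax → ILProof Ax φ
  | k1 (φ ψ : Formula) : ILProof Ax (φ.impl (ψ.impl φ))
  | k2 (φ ψ χ : Formula) : ILProof Ax ((φ.impl (ψ.impl χ)).impl ((φ.impl ψ).impl (φ.impl χ)))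
  | dne (φ : Formula) : ILProof Ax ((φ.neg.neg).impl φ)
  | L1 (φ ψ : Formula) : ILProof Ax ((box (φ.impl ψ)).impl ((box φ).impl (box ψ)))
  | L2 (φ : Formula) : ILProof Ax ((box φ).impl (box (box φ)))
  | L3 (φ : Formula) : ILProof Ax ((box ((box φ).impl φ)).impl (box φ))
  | J1 (φ ψ : Formula) : ILProof Ax ((box (φ.impl ψ)).impl (rhd φ ψ))
  | J2 (φ ψ χ : Formula) : ILProof Ax (((rhd φ ψ).conj (rhd ψ χ)).impl (rhd φ χ))
  | J3 (φ ψ χ : Formula) : ILProof Ax (((rhd φ χ).conj (rhd ψ χ)).impl (rhd (φ.disj ψ) χ))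
  | J4 (φ ψ : Formula) : ILProof Ax ((rhd φ ψ).impl ((dia φ).impl (dia ψ)))
  | J5 (φ : Formula) : ILProof Ax (rhd (dia φ) φ)
  | mp {φ ψ} : ILProof Ax (φ.impl ψ) → ILProof Ax φ → ILProof Ax ψ
  | nec {φ} : ILProof Ax φ → ILProof Ax (box φ)

/-- Montagna's principle M as a set of axiom instances. -/
def Mschema : Set Formula :=
  {φ | ∃ A B C : Formula,
    φ = (rhd A B).impl (rhd (A.conj (box C)) (B.conj (box C)))}

/-- Provability in IL(M). -/
def ILMProvable (φ : Formula) : Prop := ILProof Mschema φ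

/-- A set of formulas is IL(X)-consistent if no finite list of its members
implies ⊥ (as an iterated implication) provably in IL(X). -/
def Consistent (Ax : Set Formula) (Γ : Set Formula) : Prop :=
  ¬ ∃ L : List Formula, (∀ ψ ∈ L, ψ ∈ Γ) ∧
      ILProof Ax (L.foldr Formula.impl Formula.bot)

/-- Maximal IL(X)-consistent set. -/
def MCS (Ax : Set Formula) (Γ : Set Formula) : Prop :=
  Consistent Ax Γ ∧ ∀ φ : Formula, φ ∈ Γ ∨ φ.neg ∈ Γ

/-- The successor relation Γ ≺ Δ. -/
def prec (Γ Δ : Set Formula) : Prop :=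
  ∀ A : Formula, box A ∈ Γ → A ∈ Δ ∧ box A ∈ Δ

/-- The C-critical successor relation Γ ≺_C Δ. -/
def critSucc (C : Formula) (Γ Δ : Set Formula) : Prop :=
  ∀ A : Formula, rhd A C ∈ Γ → A.neg ∈ Δ ∧ box A.neg ∈ Δ

/-- Box-inclusion Γ ⊆_Box Δ. -/
def boxSub (Γ Δ : Set Formula) : Prop :=
  ∀ A : Formula, box A ∈ Γ → box A ∈ Δ

open Formula

abbrev Pr (φ : Formula) : Prop := ILProof Mschema φ

theorem Pr.mp {a b : Formula} (h : Pr (a.impl b)) (ha : Pr a) : Pr b := ILProof.mp h ha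

theorem pid (a : Formula) : Pr (a.impl a) :=
  ((ILProof.k2 a (a.impl a) a).mp (ILProof.k1 a (a.impl a))).mp (ILProof.k1 a a)

theorem imp_trans {a b c : Formula} (hab : Pr (a.impl b)) (hbc : Pr (b.impl c)) :
    Pr (a.impl c) :=
  ((ILProof.k2 a b c).mp ((ILProof.k1 (b.impl c) a).mp hbc)).mp hab

/-- object-level composition -/
theorem compPr (b P Q : Formula) :
    Pr ((P.impl Q).impl ((b.impl P).impl (b.impl Q))) :=
  imp_trans (ILProof.k1 (P.impl Q) b) (ILProof.k2 b P Q)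

/-- Derivability with a list of hypotheses (outermost = head). -/
def Dv (L : List Formula) (φ : Formula) : Prop := Pr (L.foldr Formula.impl φ)

theorem distPr : ∀ (L : List Formula) (x y : Formula),
    Pr ((L.foldr Formula.impl (x.impl y)).impl
      ((L.foldr Formula.impl x).impl (L.foldr Formula.impl y)))
  | [], x, y => pid _
  | (a :: L), x, y => by
      have IH := distPr L x y
      have h1 : Pr ((a.impl (L.foldr Formula.impl (x.impl y))).impl
          (a.impl ((L.foldr Formula.impl x).impl (L.foldr Formula.impl y)))) :=
        (compPr a _ _).mp IH
      exact imp_trans h1 (ILProof.k2 a _ _)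

theorem Dv.thm {φ : Formula} (h : Pr φ) : ∀ {L : List Formula}, Dv L φ
  | [] => h
  | (a :: L) => (ILProof.k1 _ a).mp (Dv.thm h (L := L))

theorem Dv.mp {L : List Formula} {a b : Formula}
    (h : Dv L (a.impl b)) (ha : Dv L a) : Dv L b :=
  ((distPr L a b).mp h).mp ha

theorem selfChain : ∀ (L : List Formula) (a : Formula),
    Pr (a.impl (L.foldr Formula.impl a))
  | [], a => pid a
  | (c :: L), a => imp_trans (selfChain L a) (ILProof.k1 _ c)

theorem Dv.ax : ∀ {L : List Formula} {a : Formula}, a ∈ L → Dv L a := by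
  intro L
  induction L with
  | nil => intro a ha; cases ha
  | cons b L ih =>
    intro a ha
    rcases List.mem_cons.1 ha with h | h
    · subst h
      exact selfChain L a
    · exact (ILProof.k1 _ b).mp (ih h)

theorem Dv.chain {L' : List Formula} : ∀ {L : List Formula} {φ : Formula},
    Dv L' (L.foldr Formula.impl φ) → (∀ ψ ∈ L, Dv L' ψ) → Dv L' φ
  | [], _, h, _ => h
  | (a :: L), φ, h, hall => by
      have ha : Dv L' a := hall a (List.mem_cons_self)
      have h' : Dv L' (L.foldr Formula.impl φ) := by
        have : Dv L' ((a :: L).foldr Formula.impl φ) := h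
        exact Dv.mp this ha
      exact Dv.chain h' (fun ψ hψ => hall ψ (List.mem_cons_of_mem _ hψ))

theorem Dv.ofImp {L L' : List Formula} {φ : Formula}
    (hall : ∀ ψ ∈ L, Dv L' ψ) (h : Dv L φ) : Dv L' φ :=
  Dv.chain (Dv.thm h) hall

theorem Dv.mono {L L' : List Formula} {φ : Formula}
    (hsub : ∀ ψ ∈ L, ψ ∈ L') (h : Dv L φ) : Dv L' φ :=
  Dv.ofImp (fun ψ hψ => Dv.ax (hsub ψ hψ)) h

theorem Dv.weak {L : List Formula} {a φ : Formula} (h : Dv L φ) : Dv (a :: L) φ :=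
  Dv.mono (fun ψ hψ => List.mem_cons_of_mem _ hψ) h

theorem flipPr (a b c : Formula) :
    Pr ((a.impl (b.impl c)).impl (b.impl (a.impl c))) := by
  have h1 : Dv [a.impl (b.impl c), b, a] (a.impl (b.impl c)) := Dv.ax (by simp)
  have h2 : Dv [a.impl (b.impl c), b, a] b := Dv.ax (by simp)
  have h3 : Dv [a.impl (b.impl c), b, a] a := Dv.ax (by simp)
  exact Dv.mp (Dv.mp h1 h3) h2

theorem rotInPr : ∀ (L : List Formula) (a φ : Formula),
    Pr ((L.foldr Formula.impl (a.impl φ)).impl (a.impl (L.foldr Formula.impl φ)))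
  | [], a, φ => pid _
  | (c :: L), a, φ => by
      have IH := rotInPr L a φ
      have h1 : Pr ((c.impl (L.foldr Formula.impl (a.impl φ))).impl
          (c.impl (a.impl (L.foldr Formula.impl φ)))) := (compPr c _ _).mp IH
      exact imp_trans h1 (flipPr c a _)

theorem rotOutPr : ∀ (L : List Formula) (a φ : Formula),
    Pr ((a.impl (L.foldr Formula.impl φ)).impl (L.foldr Formula.impl (a.impl φ)))
  | [], a, φ => pid _
  | (c :: L), a, φ => by
      have IH := rotOutPr L a φ
      have h1 : Pr ((c.impl (a.impl (L.foldr Formula.impl φ))).impl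
          (c.impl (L.foldr Formula.impl (a.impl φ)))) := (compPr c _ _).mp IH
      exact imp_trans (flipPr a c _) h1

/-- remove head hypothesis into an implication -/
theorem Dv.pop {L : List Formula} {a φ : Formula} (h : Dv (a :: L) φ) :
    Dv L (a.impl φ) := (rotOutPr L a φ).mp h

theorem Dv.push {L : List Formula} {a φ : Formula} (h : Dv L (a.impl φ)) :
    Dv (a :: L) φ := (rotInPr L a φ).mp h

theorem Dv.byContra {L : List Formula} {φ : Formula}
    (h : Dv (φ.neg :: L) Formula.bot) : Dv L φ :=
  (Dv.thm (ILProof.dne φ) : Dv L (φ.neg.neg.impl φ)).mp (Dv.pop h)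

theorem bot_elim (φ : Formula) : Pr (Formula.bot.impl φ) :=
  imp_trans (ILProof.k1 Formula.bot φ.neg) (ILProof.dne φ)

theorem Dv.exfalso {L : List Formula} {φ : Formula} (h : Dv L Formula.bot) : Dv L φ :=
  (Dv.thm (bot_elim φ)).mp h

theorem Dv.negE {L : List Formula} {φ ψ : Formula}
    (hn : Dv L φ.neg) (hp : Dv L φ) : Dv L ψ :=
  Dv.exfalso (Dv.mp hn hp)

theorem Dv.em {L : List Formula} {φ ψ : Formula}
    (h1 : Dv (φ :: L) ψ) (h2 : Dv (φ.neg :: L) ψ) : Dv L ψ := by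
  apply Dv.byContra
  have i1 : Dv (ψ.neg :: L) (φ.impl ψ) := Dv.weak (Dv.pop h1)
  have i2 : Dv (ψ.neg :: L) (φ.neg.impl ψ) := Dv.weak (Dv.pop h2)
  have hnψ : Dv (ψ.neg :: L) ψ.neg := Dv.ax (List.mem_cons_self)
  have hnφ : Dv (ψ.neg :: L) φ.neg := by
    apply Dv.pop
    exact Dv.mp (Dv.weak hnψ) (Dv.mp (Dv.weak i1) (Dv.ax (List.mem_cons_self)))
  exact Dv.mp hnψ (Dv.mp i2 hnφ)

/-- conjunction and disjunction rules -/
theorem Dv.conjI {L : List Formula} {a b : Formula}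
    (ha : Dv L a) (hb : Dv L b) : Dv L (a.conj b) := by
  show Dv L ((a.impl b.neg).impl Formula.bot)
  apply Dv.pop
  exact Dv.mp (Dv.mp (Dv.ax (List.mem_cons_self)) (Dv.weak ha)) (Dv.weak hb)

theorem Dv.conjE1 {L : List Formula} {a b : Formula}
    (h : Dv L (a.conj b)) : Dv L a := by
  apply Dv.byContra
  have himp : Dv (a.neg :: L) (a.impl b.neg) := by
    have hna : Dv (a :: a.neg :: L) a.neg := Dv.ax (by simp)
    have hpa : Dv (a :: a.neg :: L) a := Dv.ax (by simp)
    exact Dv.pop (Dv.negE hna hpa)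
  exact Dv.mp (Dv.weak h) himp

theorem Dv.conjE2 {L : List Formula} {a b : Formula}
    (h : Dv L (a.conj b)) : Dv L b := by
  apply Dv.byContra
  have himp : Dv (b.neg :: L) (a.impl b.neg) := by
    have : Dv (a :: b.neg :: L) b.neg := Dv.ax (by simp)
    exact Dv.pop this
  exact Dv.mp (Dv.weak h) himp

theorem Dv.disjI1 {L : List Formula} {a b : Formula} (h : Dv L a) :
    Dv L (a.disj b) := by
  show Dv L (a.neg.impl b)
  apply Dv.pop
  exact Dv.negE (Dv.ax (List.mem_cons_self)) (Dv.weak h)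

theorem Dv.disjI2 {L : List Formula} {a b : Formula} (h : Dv L b) :
    Dv L (a.disj b) := by
  show Dv L (a.neg.impl b)
  apply Dv.pop
  exact Dv.weak h

theorem Dv.disjE {L : List Formula} {a b c : Formula}
    (h : Dv L (a.disj b)) (h1 : Dv (a :: L) c) (h2 : Dv (b :: L) c) : Dv L c := by
  apply Dv.em h1
  have hb : Dv (a.neg :: L) b :=
    Dv.mp (Dv.weak h) (Dv.ax (List.mem_cons_self))
  exact Dv.mp (Dv.weak (Dv.pop h2)) hb

/-- theorem-level helpers -/
theorem Pr.conj_intro {a b : Formula} (ha : Pr a) (hb : Pr b) : Pr (a.conj b) :=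
  (Dv.conjI (L := []) ha hb : Dv [] _)

theorem Pr.contrapos {a b : Formula} (h : Pr (a.impl b)) : Pr (b.neg.impl a.neg) := by
  have h1 : Dv [b.neg, a] b.neg := Dv.ax (by simp)
  have h2 : Dv [b.neg, a] a := Dv.ax (by simp)
  have : Dv [b.neg, a] Formula.bot := Dv.mp h1 (Dv.mp (Dv.thm h) h2)
  exact this

theorem conj_imp1 (a b : Formula) : Pr ((a.conj b).impl a) := by
  have h : Dv [a.conj b] (a.conj b) := Dv.ax (by simp)
  exact Dv.conjE1 h

theorem conj_imp2 (a b : Formula) : Pr ((a.conj b).impl b) := by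
  have h : Dv [a.conj b] (a.conj b) := Dv.ax (by simp)
  exact Dv.conjE2 h

theorem pr_top : Pr Formula.top := pid Formula.bot

open Formula

/-- From inconsistency, extract a contradiction list. -/
theorem Consistent.noDv {Γ : Set Formula} (h : Consistent Mschema Γ)
    {L : List Formula} (hL : ∀ ψ ∈ L, ψ ∈ Γ) (hd : Dv L Formula.bot) : False :=
  h ⟨L, hL, hd⟩

theorem MCS.dvMem {Γ : Set Formula} (hΓ : MCS Mschema Γ)
    {L : List Formula} (hL : ∀ ψ ∈ L, ψ ∈ Γ) {φ : Formula} (hd : Dv L φ) : φ ∈ Γ := by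
  rcases hΓ.2 φ with h | h
  · exact h
  · exfalso
    apply hΓ.1.noDv (L := φ.neg :: L)
    · intro ψ hψ
      rcases List.mem_cons.1 hψ with h' | h'
      · subst h'; exact h
      · exact hL ψ h'
    · exact Dv.mp (Dv.ax (List.mem_cons_self)) (Dv.weak hd)

theorem MCS.mem_of_prov {Γ : Set Formula} (hΓ : MCS Mschema Γ) {φ : Formula}
    (h : Pr φ) : φ ∈ Γ :=
  hΓ.dvMem (L := []) (by simp) h

theorem MCS.mp_mem {Γ : Set Formula} (hΓ : MCS Mschema Γ) {φ ψ : Formula}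
    (h : φ.impl ψ ∈ Γ) (hφ : φ ∈ Γ) : ψ ∈ Γ := by
  have h1 : Dv [φ.impl ψ, φ] (φ.impl ψ) := Dv.ax (by simp)
  have h2 : Dv [φ.impl ψ, φ] φ := Dv.ax (by simp)
  exact hΓ.dvMem (L := [φ.impl ψ, φ]) (by intro x hx; simp at hx; rcases hx with h'|h' <;> subst h' <;> assumption)
    (Dv.mp h1 h2)

theorem MCS.bot_not_mem {Γ : Set Formula} (hΓ : MCS Mschema Γ) :
    Formula.bot ∉ Γ := by
  intro h
  exact hΓ.1.noDv (L := [Formula.bot]) (by simpa using h) (Dv.ax (by simp))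

theorem MCS.not_both {Γ : Set Formula} (hΓ : MCS Mschema Γ) {φ : Formula}
    (h1 : φ ∈ Γ) (h2 : φ.neg ∈ Γ) : False := by
  apply hΓ.bot_not_mem
  exact hΓ.mp_mem h2 h1

theorem MCS.neg_mem_iff {Γ : Set Formula} (hΓ : MCS Mschema Γ) {φ : Formula} :
    φ.neg ∈ Γ ↔ φ ∉ Γ := by
  constructor
  · intro h hφ; exact hΓ.not_both hφ h
  · intro h; rcases hΓ.2 φ with h' | h'
    · exact absurd h' h
    · exact h'

theorem MCS.conj_mem_iff {Γ : Set Formula} (hΓ : MCS Mschema Γ) {a b : Formula} :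
    a.conj b ∈ Γ ↔ a ∈ Γ ∧ b ∈ Γ := by
  constructor
  · intro h
    exact ⟨hΓ.mp_mem (hΓ.mem_of_prov (conj_imp1 a b)) h,
           hΓ.mp_mem (hΓ.mem_of_prov (conj_imp2 a b)) h⟩
  · rintro ⟨ha, hb⟩
    have h1 : Dv [a, b] a := Dv.ax (by simp)
    have h2 : Dv [a, b] b := Dv.ax (by simp)
    exact hΓ.dvMem (L := [a, b])
      (by intro x hx; simp at hx; rcases hx with h'|h' <;> subst h' <;> assumption)
      (Dv.conjI h1 h2)

theorem MCS.disj_mem_iff {Γ : Set Formula} (hΓ : MCS Mschema Γ) {a b : Formula} :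
    a.disj b ∈ Γ ↔ a ∈ Γ ∨ b ∈ Γ := by
  constructor
  · intro h
    by_cases ha : a ∈ Γ
    · exact Or.inl ha
    · have hna : a.neg ∈ Γ := hΓ.neg_mem_iff.2 ha
      exact Or.inr (hΓ.mp_mem h hna)
  · intro h
    rcases h with h | h
    · exact hΓ.dvMem (L := [a]) (by simpa using h) (Dv.disjI1 (Dv.ax (by simp)))
    · exact hΓ.dvMem (L := [b]) (by simpa using h) (Dv.disjI2 (Dv.ax (by simp)))

theorem MCS.impl_mem_iff {Γ : Set Formula} (hΓ : MCS Mschema Γ) {a b : Formula} :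
    a.impl b ∈ Γ ↔ (a ∈ Γ → b ∈ Γ) := by
  constructor
  · exact fun h ha => hΓ.mp_mem h ha
  · intro h
    by_cases ha : a ∈ Γ
    · have hb := h ha
      exact hΓ.dvMem (L := [b]) (by simpa using hb)
        (Dv.pop (a := a) (Dv.weak (Dv.ax (by simp))))
    · have hna : a.neg ∈ Γ := hΓ.neg_mem_iff.2 ha
      refine hΓ.dvMem (L := [a.neg]) (by simpa using hna) ?_
      apply Dv.pop (a := a)
      have h1 : Dv [a, a.neg] a.neg := Dv.ax (by simp)
      have h2 : Dv [a, a.neg] a := Dv.ax (by simp)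
      exact Dv.negE h1 h2

theorem MCS.not_mem_iff {Γ : Set Formula} (hΓ : MCS Mschema Γ) {φ : Formula} :
    φ ∉ Γ ↔ φ.neg ∈ Γ := ⟨fun h => hΓ.neg_mem_iff.2 h, fun h => hΓ.neg_mem_iff.1 h⟩

/-- Lindenbaum -/
theorem lindenbaum {Γ0 : Set Formula} (h : Consistent Mschema Γ0) :
    ∃ Γ, Γ0 ⊆ Γ ∧ MCS Mschema Γ := by
  obtain ⟨m, hm0, hmax⟩ := zorn_subset_nonempty {Γ | Consistent Mschema Γ}
    (fun c hc hchain hne => by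
      refine ⟨⋃₀ c, ?_, fun s hs => Set.subset_sUnion_of_mem hs⟩
      rintro ⟨L, hL, hd⟩
      -- find a single member of the chain containing all of L
      have : ∃ t ∈ c, ∀ ψ ∈ L, ψ ∈ t := by
        clear hd
        induction L with
        | nil => exact ⟨hne.some, hne.some_mem, by simp⟩
        | cons a L ih =>
          obtain ⟨t, htc, ht⟩ := ih (fun ψ hψ => hL ψ (List.mem_cons_of_mem _ hψ))
          obtain ⟨s, hsc, has⟩ := hL a (List.mem_cons_self)
          rcases hchain.total htc hsc with hts | hst
          · exact ⟨s, hsc, fun ψ hψ => by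
              rcases List.mem_cons.1 hψ with h' | h'
              · subst h'; exact has
              · exact hts (ht ψ h')⟩
          · exact ⟨t, htc, fun ψ hψ => by
              rcases List.mem_cons.1 hψ with h' | h'
              · subst h'; exact hst has
              · exact ht ψ h'⟩
      obtain ⟨t, htc, ht⟩ := this
      exact (hc htc) ⟨L, ht, hd⟩) Γ0 h
  refine ⟨m, hm0, hmax.1, ?_⟩
  intro φ
  by_contra hcon
  push_neg at hcon
  obtain ⟨h1, h2⟩ := hcon
  -- both extensions are inconsistent
  have key : ∀ ψ : Formula, ψ ∉ m → ∃ L : List Formula, (∀ χ ∈ L, χ ∈ m) ∧ Dv L ψ.neg := by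
    intro ψ hψ
    have : ¬ Consistent Mschema (insert ψ m) := by
      intro hcons
      have := hmax.eq_of_ge (y := insert ψ m) hcons (Set.subset_insert _ _)
      exact hψ (this ▸ Set.mem_insert _ _)
    rw [Consistent] at this
    push_neg at this
    obtain ⟨L, hL, hd⟩ := this
    classical
    refine ⟨L.filter (fun χ => decide (χ ∈ m)), ?_, ?_⟩
    · intro χ hχ
      have := List.of_mem_filter hχ
      simpa using this
    · -- Dv (filtered) ψ.neg : from Dv L bot, every elt of L is ψ or in filtered list
      have hmono : Dv (ψ :: L.filter (fun χ => decide (χ ∈ m))) Formula.bot := by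
        refine Dv.mono (L := L) ?_ hd
        intro χ hχ
        rcases hL χ hχ with h' | h'
        · subst h'; exact List.mem_cons_self
        · exact List.mem_cons_of_mem _ (List.mem_filter.2 ⟨hχ, by simpa using h'⟩)
      exact Dv.pop hmono
  obtain ⟨L1, hL1, hd1⟩ := key φ h1
  obtain ⟨L2, hL2, hd2⟩ := key φ.neg h2
  apply hmax.1.noDv (L := L1 ++ L2)
  · intro ψ hψ
    rcases List.mem_append.1 hψ with h' | h'
    · exact hL1 ψ h'
    · exact hL2 ψ h'
  · have d1 : Dv (L1 ++ L2) φ.neg := Dv.mono (fun ψ hψ => List.mem_append_left _ hψ) hd1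
    have d2 : Dv (L1 ++ L2) φ.neg.neg := Dv.mono (fun ψ hψ => List.mem_append_right _ hψ) hd2
    exact Dv.mp d2 d1

/-! ### Modal and ▷ lemmas -/

theorem box_mono {a b : Formula} (h : Pr (a.impl b)) :
    Pr ((Formula.box a).impl (Formula.box b)) :=
  (ILProof.L1 a b).mp (ILProof.nec h)

theorem MCS.box_mono_mem {Γ : Set Formula} (hΓ : MCS Mschema Γ) {a b : Formula}
    (h : Pr (a.impl b)) (ha : Formula.box a ∈ Γ) : Formula.box b ∈ Γ :=
  hΓ.mp_mem (hΓ.mem_of_prov (box_mono h)) ha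

theorem MCS.box_conj_mem {Γ : Set Formula} (hΓ : MCS Mschema Γ) {a b : Formula}
    (ha : Formula.box a ∈ Γ) (hb : Formula.box b ∈ Γ) : Formula.box (a.conj b) ∈ Γ := by
  have h1 : Pr (a.impl (b.impl (a.conj b))) := by
    have : Dv [a, b] (a.conj b) := Dv.conjI (Dv.ax (by simp)) (Dv.ax (by simp))
    exact this
  have h2 : Formula.box (b.impl (a.conj b)) ∈ Γ := hΓ.box_mono_mem h1 ha
  have h3 := hΓ.mp_mem (hΓ.mem_of_prov (ILProof.L1 b (a.conj b))) h2
  exact hΓ.mp_mem h3 hb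

theorem MCS.box_top_mem {Γ : Set Formula} (hΓ : MCS Mschema Γ) :
    Formula.box Formula.top ∈ Γ := hΓ.mem_of_prov (ILProof.nec pr_top)

theorem MCS.box_foldr_conj_mem {Γ : Set Formula} (hΓ : MCS Mschema Γ) :
    ∀ {l : List Formula}, (∀ ψ ∈ l, Formula.box ψ ∈ Γ) →
      Formula.box (l.foldr Formula.conj Formula.top) ∈ Γ
  | [], _ => hΓ.box_top_mem
  | (a :: l), h => by
      have h1 : Formula.box a ∈ Γ := h a (List.mem_cons_self)
      have h2 := hΓ.box_foldr_conj_mem (l := l) (fun ψ hψ => h ψ (List.mem_cons_of_mem _ hψ))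
      exact hΓ.box_conj_mem h1 h2

theorem conj_foldr_proj {l : List Formula} {ψ : Formula} (h : ψ ∈ l) :
    Pr ((l.foldr Formula.conj Formula.top).impl ψ) := by
  induction l with
  | nil => cases h
  | cons a l ih =>
    rcases List.mem_cons.1 h with h' | h'
    · subst h'; exact conj_imp1 _ _
    · exact imp_trans (conj_imp2 _ _) (ih h')

theorem disj_foldr_intro {l : List Formula} {ψ : Formula} (h : ψ ∈ l) :
    Pr (ψ.impl (l.foldr Formula.disj Formula.bot)) := by
  induction l with
  | nil => cases h
  | cons a l ih =>
    rcases List.mem_cons.1 h with h' | h'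
    · subst h'
      have hx : Dv [ψ] ψ := Dv.ax (by simp)
      have d : Dv [ψ] (ψ.disj (l.foldr Formula.disj Formula.bot)) := Dv.disjI1 hx
      exact d
    · refine imp_trans (ih h') ?_
      have hx : Dv [l.foldr Formula.disj Formula.bot] (l.foldr Formula.disj Formula.bot) :=
        Dv.ax (by simp)
      have d : Dv [l.foldr Formula.disj Formula.bot]
          (a.disj (l.foldr Formula.disj Formula.bot)) := Dv.disjI2 hx
      exact d

theorem MCS.rhd_trans_mem {Γ : Set Formula} (hΓ : MCS Mschema Γ) {a b c : Formula}
    (h1 : Formula.rhd a b ∈ Γ) (h2 : Formula.rhd b c ∈ Γ) : Formula.rhd a c ∈ Γ := by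
  have hc : (Formula.rhd a b).conj (Formula.rhd b c) ∈ Γ := hΓ.conj_mem_iff.2 ⟨h1, h2⟩
  exact hΓ.mp_mem (hΓ.mem_of_prov (ILProof.J2 a b c)) hc

theorem pr_rhd_self (a : Formula) : Pr (Formula.rhd a a) :=
  (ILProof.J1 a a).mp (ILProof.nec (pid a))

theorem pr_rhd_bot (c : Formula) : Pr (Formula.rhd Formula.bot c) :=
  (ILProof.J1 _ c).mp (ILProof.nec (bot_elim c))

theorem MCS.rhd_foldr_disj_mem {Γ : Set Formula} (hΓ : MCS Mschema Γ) {c : Formula} :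
    ∀ {xs : List Formula}, (∀ X ∈ xs, Formula.rhd X c ∈ Γ) →
      Formula.rhd (xs.foldr Formula.disj Formula.bot) c ∈ Γ
  | [], _ => hΓ.mem_of_prov (pr_rhd_bot c)
  | (a :: xs), h => by
      have h1 : Formula.rhd a c ∈ Γ := h a (List.mem_cons_self)
      have h2 := hΓ.rhd_foldr_disj_mem (xs := xs)
        (fun X hX => h X (List.mem_cons_of_mem _ hX))
      have hc := hΓ.conj_mem_iff.2 ⟨h1, h2⟩
      exact hΓ.mp_mem (hΓ.mem_of_prov (ILProof.J3 a _ c)) hc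

theorem pr_disj_dia_rhd (a : Formula) : Pr (Formula.rhd (a.disj (Formula.dia a)) a) :=
  (ILProof.J3 a (Formula.dia a) a).mp ((pr_rhd_self a).conj_intro (ILProof.J5 a))

/-- GL: ◇a → ◇(a ∧ □¬a), in the form □¬(a∧□¬a) → □¬a -/
theorem gl_dia (a : Formula) :
    Pr ((Formula.box (a.conj (Formula.box a.neg)).neg).impl (Formula.box a.neg)) := by
  have h1 : Pr ((a.conj (Formula.box a.neg)).neg.impl ((Formula.box a.neg).impl a.neg)) := by
    have d1 : Dv [(a.conj (Formula.box a.neg)).neg, Formula.box a.neg, a] Formula.bot := by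
      have hn : Dv [(a.conj (Formula.box a.neg)).neg, Formula.box a.neg, a]
        (a.conj (Formula.box a.neg)).neg := Dv.ax (by simp)
      have hb : Dv [(a.conj (Formula.box a.neg)).neg, Formula.box a.neg, a]
        (Formula.box a.neg) := Dv.ax (by simp)
      have hA : Dv [(a.conj (Formula.box a.neg)).neg, Formula.box a.neg, a] a := Dv.ax (by simp)
      exact Dv.mp hn (Dv.conjI hA hb)
    exact d1
  exact imp_trans (box_mono h1) (ILProof.L3 a.neg)

/-- IL ⊢ a ▷ (a ∧ □¬a) -/
theorem pr_rhd_boxneg (a : Formula) :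
    Pr (Formula.rhd a (a.conj (Formula.box a.neg))) := by
  set D := a.conj (Formula.box a.neg) with hD
  have step1 : Pr (a.impl (D.disj (Formula.dia D))) := by
    apply Dv.pop (L := [])
    apply Dv.em (φ := Formula.box D.neg)
    · -- have □¬D: then □¬a by gl_dia, so D holds, left disjunct
      have hbox : Dv [Formula.box D.neg, a] (Formula.box a.neg) :=
        Dv.mp (Dv.thm (gl_dia a)) (Dv.ax (by simp [hD]))
      have hA : Dv [Formula.box D.neg, a] a := Dv.ax (by simp)
      exact Dv.disjI1 (Dv.conjI hA hbox)
    · -- ¬□¬D = ◇D, right disjunct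
      have : Dv [(Formula.box D.neg).neg, a] (Formula.dia D) := Dv.ax (by simp [Formula.dia])
      exact Dv.disjI2 this
  have h2 : Pr (Formula.rhd a (D.disj (Formula.dia D))) :=
    (ILProof.J1 _ _).mp (ILProof.nec step1)
  have h3 : Pr (Formula.rhd (D.disj (Formula.dia D)) D) := pr_disj_dia_rhd D
  exact (ILProof.J2 _ _ _).mp (h2.conj_intro h3)

theorem pr_boxneg_imp_rhd (a b : Formula) :
    Pr ((Formula.box a.neg).impl (Formula.rhd a b)) := by
  have h1 : Pr (a.neg.impl (a.impl b)) := by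
    have x1 : Dv [a.neg, a] a.neg := Dv.ax (by simp)
    have x2 : Dv [a.neg, a] a := Dv.ax (by simp)
    have d : Dv [a.neg, a] b := Dv.negE x1 x2
    exact d
  exact imp_trans (box_mono h1) (ILProof.J1 a b)

theorem MCS.M_mem {Γ : Set Formula} (hΓ : MCS Mschema Γ) {a b c : Formula}
    (h : Formula.rhd a b ∈ Γ) :
    Formula.rhd (a.conj (Formula.box c)) (b.conj (Formula.box c)) ∈ Γ :=
  hΓ.mp_mem (hΓ.mem_of_prov (ILProof.ax ⟨a, b, c, rfl⟩)) h

/-- every prec-successor pair of MCS's is ⊥-critical -/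
theorem crit_bot {Γ Δ : Set Formula} (hΓ : MCS Mschema Γ)
    (hp : prec Γ Δ) : critSucc Formula.bot Γ Δ := by
  intro X hX
  have h1 : (Formula.dia X).impl (Formula.dia Formula.bot) ∈ Γ :=
    hΓ.mp_mem (hΓ.mem_of_prov (ILProof.J4 X Formula.bot)) hX
  have h2 : Formula.box Formula.bot.neg ∈ Γ :=
    hΓ.mem_of_prov (ILProof.nec (pid Formula.bot))
  have h3 : (Formula.dia Formula.bot).neg ∈ Γ := by
    have : Pr ((Formula.box Formula.bot.neg).impl (Formula.dia Formula.bot).neg) := by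
      have x1 : Dv [Formula.box Formula.bot.neg, (Formula.box Formula.bot.neg).neg]
          ((Formula.box Formula.bot.neg).neg) := Dv.ax (by simp)
      have x2 : Dv [Formula.box Formula.bot.neg, (Formula.box Formula.bot.neg).neg]
          (Formula.box Formula.bot.neg) := Dv.ax (by simp)
      have d : Dv [Formula.box Formula.bot.neg, (Formula.box Formula.bot.neg).neg]
          Formula.bot := Dv.mp x1 x2
      exact d
    exact hΓ.mp_mem (hΓ.mem_of_prov this) h2
  have h4 : (Formula.dia X).neg ∈ Γ := by
    have : Pr (((Formula.dia X).impl (Formula.dia Formula.bot)).impl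
        ((Formula.dia Formula.bot).neg.impl (Formula.dia X).neg)) := by
      have d : Dv [(Formula.dia X).impl (Formula.dia Formula.bot),
          (Formula.dia Formula.bot).neg, Formula.dia X] Formula.bot := by
        have x1 : Dv [(Formula.dia X).impl (Formula.dia Formula.bot),
            (Formula.dia Formula.bot).neg, Formula.dia X]
            ((Formula.dia X).impl (Formula.dia Formula.bot)) := Dv.ax (by simp)
        have x2 : Dv [(Formula.dia X).impl (Formula.dia Formula.bot),
            (Formula.dia Formula.bot).neg, Formula.dia X]
            ((Formula.dia Formula.bot).neg) := Dv.ax (by simp)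
        have x3 : Dv [(Formula.dia X).impl (Formula.dia Formula.bot),
            (Formula.dia Formula.bot).neg, Formula.dia X] (Formula.dia X) := Dv.ax (by simp)
        exact Dv.mp x2 (Dv.mp x1 x3)
      exact d
    exact hΓ.mp_mem (hΓ.mp_mem (hΓ.mem_of_prov this) h1) h3
  -- dia X = (box X.neg).neg, so ¬¬(box X.neg) ∈ Γ hence box X.neg ∈ Γ
  have h5 : Formula.box X.neg ∈ Γ := by
    have : Pr ((Formula.dia X).neg.impl (Formula.box X.neg)) := ILProof.dne _
    exact hΓ.mp_mem (hΓ.mem_of_prov this) h4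
  exact ⟨(hp X.neg h5).1, (hp X.neg h5).2⟩
/-! ### Existence lemmas -/

def strip : Formula → Formula
  | .box (.impl X .bot) => X
  | .impl X .bot => X
  | f => f

def unbox : Formula → Formula
  | .box ψ => ψ
  | f => f

theorem strip_neg (X : Formula) : strip X.neg = X := rfl
theorem strip_box_neg (X : Formula) : strip (Formula.box X.neg) = X := rfl
theorem unbox_box (X : Formula) : unbox (Formula.box X) = X := rfl

theorem MCS.box_box_mem {Γ : Set Formula} (hΓ : MCS Mschema Γ) {ψ : Formula}
    (h : Formula.box ψ ∈ Γ) : Formula.box (Formula.box ψ) ∈ Γ :=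
  hΓ.mp_mem (hΓ.mem_of_prov (ILProof.L2 ψ)) h

/-- E1 : GL-style successor for refuting box C -/
theorem exists_succ_box {Γ : Set Formula} (hΓ : MCS Mschema Γ) {C : Formula}
    (hC : Formula.box C ∉ Γ) :
    ∃ Δ, MCS Mschema Δ ∧ prec Γ Δ ∧ C.neg ∈ Δ ∧ Formula.box C ∈ Δ ∧ boxSub Γ Δ := by
  classical
  set T : Set Formula := insert C.neg (insert (Formula.box C) {ψ | Formula.box ψ ∈ Γ}) with hT
  have hcons : Consistent Mschema T := by
    rintro ⟨L, hL, hd⟩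
    set lP : List Formula := L.filter (fun x => decide (Formula.box x ∈ Γ)) with hlP
    have hlPmem : ∀ ψ ∈ lP, Formula.box ψ ∈ Γ := by
      intro ψ hψ
      have := List.mem_filter.1 hψ
      simpa using this.2
    set Pc : Formula := lP.foldr Formula.conj Formula.top with hPc
    have dd : Dv [Pc, Formula.box C, C.neg] Formula.bot := by
      refine Dv.ofImp (fun x hx => ?_) hd
      rcases hL x hx with h | h
      · subst h; exact Dv.ax (by simp)
      · rcases h with h | h
        · subst h; exact Dv.ax (by simp)
        · have hxP : x ∈ lP := List.mem_filter.2 ⟨hx, by simpa using h⟩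
          exact Dv.mp (Dv.thm (conj_foldr_proj hxP)) (Dv.ax (by simp [hPc]))
    have d2 : Dv [Pc, Formula.box C] C := by
      apply Dv.byContra
      exact Dv.mono (L := [Pc, Formula.box C, C.neg]) (by intro x hx; simp at hx ⊢; tauto) dd
    have d3 : Pr (Pc.impl ((Formula.box C).impl C)) := d2
    have d4 : Pr ((Formula.box Pc).impl (Formula.box C)) :=
      imp_trans (box_mono d3) (ILProof.L3 C)
    exact hC (hΓ.mp_mem (hΓ.mem_of_prov d4) (hΓ.box_foldr_conj_mem hlPmem))
  obtain ⟨Δ, hTΔ, hΔ⟩ := lindenbaum hcons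
  refine ⟨Δ, hΔ, ?_, ?_, ?_, ?_⟩
  · intro ψ hψ
    constructor
    · exact hTΔ (by simp [hT]; right; right; exact hψ)
    · exact hTΔ (by simp [hT]; right; right; exact hΓ.box_box_mem hψ)
  · exact hTΔ (by simp [hT])
  · exact hTΔ (by simp [hT])
  · intro ψ hψ
    exact hTΔ (by simp [hT]; right; right; exact hΓ.box_box_mem hψ)

/-- E2 : critical successor for refuting a ▷ b -/
theorem exists_crit_succ {Γ : Set Formula} (hΓ : MCS Mschema Γ) {a b : Formula}
    (hab : Formula.rhd a b ∉ Γ) :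
    ∃ Δ, MCS Mschema Δ ∧ prec Γ Δ ∧ critSucc b Γ Δ ∧ a ∈ Δ ∧
      Formula.box a.neg ∈ Δ := by
  classical
  set N : Set Formula :=
    {x | ∃ X, Formula.rhd X b ∈ Γ ∧ (x = X.neg ∨ x = Formula.box X.neg)} with hN
  set T : Set Formula := insert a (insert (Formula.box a.neg)
    (N ∪ {ψ | Formula.box ψ ∈ Γ})) with hT
  have hcons : Consistent Mschema T := by
    rintro ⟨L, hL, hd⟩
    set lN : List Formula := L.filter (fun x => decide (x ∈ N)) with hlN
    set lP : List Formula := L.filter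
      (fun x => decide (Formula.box x ∈ Γ ∧ x ∉ N)) with hlP
    have hlPmem : ∀ ψ ∈ lP, Formula.box ψ ∈ Γ := by
      intro ψ hψ
      have := List.mem_filter.1 hψ
      simp at this
      exact this.2.1
    set xs : List Formula := lN.map strip with hxs
    have hxsmem : ∀ X ∈ xs, Formula.rhd X b ∈ Γ := by
      intro X hX
      obtain ⟨x, hx, hsx⟩ := List.mem_map.1 hX
      have hx' : x ∈ N := by
        have := List.mem_filter.1 hx
        simpa using this.2
      obtain ⟨X', hX', hshape⟩ := hx'
      rcases hshape with h | h
      · subst h; rw [strip_neg] at hsx; subst hsx; exact hX'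
      · subst h; rw [strip_box_neg] at hsx; subst hsx; exact hX'
    set Xd : Formula := xs.foldr Formula.disj Formula.bot with hXd
    set Pc : Formula := lP.foldr Formula.conj Formula.top with hPc
    set ctx : List Formula := [Pc, a, Formula.box a.neg, Xd.neg, Formula.box Xd.neg]
      with hctx
    have dd : Dv ctx Formula.bot := by
      refine Dv.ofImp (fun x hx => ?_) hd
      rcases hL x hx with h | h
      · subst h; exact Dv.ax (by simp [hctx])
      · rcases h with h | h
        · subst h; exact Dv.ax (by simp [hctx])
        · rcases h with h | h
          · -- x ∈ N
            obtain ⟨X, hX, hshape⟩ := h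
            have hXxs : X ∈ xs := by
              refine List.mem_map.2 ⟨x, List.mem_filter.2 ⟨hx, ?_⟩, ?_⟩
              · simp; exact ⟨X, hX, hshape⟩
              · rcases hshape with h' | h' <;> (subst h'; simp [strip_neg, strip_box_neg])
            have himp : Pr (X.impl Xd) := disj_foldr_intro hXxs
            rcases hshape with h' | h'
            · subst h'
              exact Dv.mp (Dv.thm himp.contrapos) (Dv.ax (by simp [hctx]))
            · subst h'
              exact Dv.mp (Dv.thm (box_mono himp.contrapos)) (Dv.ax (by simp [hctx]))
          · by_cases hxN : x ∈ N
            · obtain ⟨X, hX, hshape⟩ := hxN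
              have hXxs : X ∈ xs := by
                refine List.mem_map.2 ⟨x, List.mem_filter.2 ⟨hx, ?_⟩, ?_⟩
                · simp; exact ⟨X, hX, hshape⟩
                · rcases hshape with h' | h' <;>
                    (subst h'; simp [strip_neg, strip_box_neg])
              have himp : Pr (X.impl Xd) := disj_foldr_intro hXxs
              rcases hshape with h' | h'
              · subst h'
                exact Dv.mp (Dv.thm himp.contrapos) (Dv.ax (by simp [hctx]))
              · subst h'
                exact Dv.mp (Dv.thm (box_mono himp.contrapos)) (Dv.ax (by simp [hctx]))
            · have hxP : x ∈ lP := List.mem_filter.2 ⟨hx, by simp; exact ⟨h, hxN⟩⟩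
              exact Dv.mp (Dv.thm (conj_foldr_proj hxP)) (Dv.ax (by simp [hctx, hPc]))
    -- dd : Pc → a → □¬a → ¬Xd → □¬Xd → ⊥ ; read as Pc → a → □¬a → (Xd ∨ ◇Xd)
    have d3 : Dv [Pc, a, Formula.box a.neg] (Xd.disj (Formula.dia Xd)) := dd
    have dθ : Dv [Pc] ((a.conj (Formula.box a.neg)).impl (Xd.disj (Formula.dia Xd))) := by
      apply Dv.pop (a := a.conj (Formula.box a.neg))
      set c2 : List Formula := [a.conj (Formula.box a.neg), Pc] with hc2
      have e0 : Dv c2 (a.impl ((Formula.box a.neg).impl (Xd.disj (Formula.dia Xd)))) :=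
        Dv.mp (Dv.thm (d3 : Pr _)) (Dv.ax (by simp [hc2]))
      have ec : Dv c2 (a.conj (Formula.box a.neg)) := Dv.ax (by simp [hc2])
      have := Dv.mp (Dv.mp e0 (Dv.conjE1 ec)) (Dv.conjE2 ec)
      exact Dv.mono (L := c2) (by intro x hx; simp [hc2] at hx ⊢; tauto) this
      -- to get context [a.conj _ , Pc] vs [a.conj _, Pc]? fix below if mismatch
    have dθ' : Pr (Pc.impl ((a.conj (Formula.box a.neg)).impl (Xd.disj (Formula.dia Xd)))) := dθ
    have hboxθ : Formula.box ((a.conj (Formula.box a.neg)).impl (Xd.disj (Formula.dia Xd))) ∈ Γ :=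
      hΓ.mp_mem (hΓ.mem_of_prov (box_mono dθ')) (hΓ.box_foldr_conj_mem hlPmem)
    have h1 : Formula.rhd (a.conj (Formula.box a.neg)) (Xd.disj (Formula.dia Xd)) ∈ Γ :=
      hΓ.mp_mem (hΓ.mem_of_prov (ILProof.J1 _ _)) hboxθ
    have h2 : Formula.rhd (a.conj (Formula.box a.neg)) Xd ∈ Γ :=
      hΓ.rhd_trans_mem h1 (hΓ.mem_of_prov (pr_disj_dia_rhd Xd))
    have h3 : Formula.rhd (a.conj (Formula.box a.neg)) b ∈ Γ :=
      hΓ.rhd_trans_mem h2 (hΓ.rhd_foldr_disj_mem hxsmem)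
    have h4 : Formula.rhd a b ∈ Γ :=
      hΓ.rhd_trans_mem (hΓ.mem_of_prov (pr_rhd_boxneg a)) h3
    exact hab h4
  obtain ⟨Δ, hTΔ, hΔ⟩ := lindenbaum hcons
  refine ⟨Δ, hΔ, ?_, ?_, ?_, ?_⟩
  · intro ψ hψ
    have m1 : ψ ∈ T := by simp [hT]; right; right; right; exact hψ
    have m2 : Formula.box ψ ∈ T := by
      simp [hT]; right; right; right; exact hΓ.box_box_mem hψ
    exact ⟨hTΔ m1, hTΔ m2⟩
  · intro X hX
    constructor
    · exact hTΔ (by simp [hT, hN]; right; right; left; exact ⟨X, hX, Or.inl rfl⟩)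
    · exact hTΔ (by simp [hT, hN]; right; right; left; exact ⟨X, hX, Or.inr rfl⟩)
  · exact hTΔ (by simp [hT])
  · exact hTΔ (by simp [hT])
/-- E3 : the ILM key lemma -/
theorem exists_M_succ {Γ Δ : Set Formula} (hΓ : MCS Mschema Γ) (hΔ : MCS Mschema Δ)
    {a b c : Formula} (hab : Formula.rhd a b ∈ Γ) (hprec : prec Γ Δ)
    (hcrit : critSucc c Γ Δ) (haΔ : a ∈ Δ) :
    ∃ Λ, MCS Mschema Λ ∧ prec Γ Λ ∧ critSucc c Γ Λ ∧ b ∈ Λ ∧ boxSub Δ Λ := by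
  classical
  set N : Set Formula :=
    {x | ∃ X, Formula.rhd X c ∈ Γ ∧ (x = X.neg ∨ x = Formula.box X.neg)} with hN
  set Q : Set Formula := {x | (∃ ξ, x = Formula.box ξ) ∧ x ∈ Δ} with hQ
  set T : Set Formula := insert b (N ∪ {ψ | Formula.box ψ ∈ Γ} ∪ Q) with hT
  have hcons : Consistent Mschema T := by
    rintro ⟨L, hL, hd⟩
    set lN : List Formula := L.filter (fun x => decide (x ∈ N)) with hlN
    set lP : List Formula := L.filter
      (fun x => decide (Formula.box x ∈ Γ ∧ x ∉ N)) with hlP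
    set lQ : List Formula := L.filter
      (fun x => decide (x ∈ Q ∧ x ∉ N ∧ ¬ (Formula.box x ∈ Γ))) with hlQ
    have hlPmem : ∀ ψ ∈ lP, Formula.box ψ ∈ Γ := by
      intro ψ hψ
      have := List.mem_filter.1 hψ
      simp at this
      exact this.2.1
    have hlQmem : ∀ q ∈ lQ, q ∈ Q := by
      intro q hq
      have := List.mem_filter.1 hq
      simp [hQ] at this
      exact ⟨this.2.1.1, this.2.1.2⟩
    set xs : List Formula := lN.map strip with hxs
    have hxsmem : ∀ X ∈ xs, Formula.rhd X c ∈ Γ := by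
      intro X hX
      obtain ⟨x, hx, hsx⟩ := List.mem_map.1 hX
      have hx' : x ∈ N := by
        have := List.mem_filter.1 hx
        simpa using this.2
      obtain ⟨X', hX', hshape⟩ := hx'
      rcases hshape with h | h
      · subst h; rw [strip_neg] at hsx; subst hsx; exact hX'
      · subst h; rw [strip_box_neg] at hsx; subst hsx; exact hX'
    set Xd : Formula := xs.foldr Formula.disj Formula.bot with hXd
    set Pc : Formula := lP.foldr Formula.conj Formula.top with hPc
    set ξc : Formula := (lQ.map unbox).foldr Formula.conj Formula.top with hξc
    have hboxξ : Formula.box ξc ∈ Δ := by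
      apply hΔ.box_foldr_conj_mem
      intro ψ hψ
      obtain ⟨q, hq, huq⟩ := List.mem_map.1 hψ
      obtain ⟨⟨ξ, hξ⟩, hqΔ⟩ := hlQmem q hq
      subst hξ
      rw [unbox_box] at huq
      subst huq
      exact hqΔ
    have hQimp : ∀ q ∈ lQ, Pr ((Formula.box ξc).impl q) := by
      intro q hq
      obtain ⟨⟨ξ, hξ⟩, _⟩ := hlQmem q hq
      subst hξ
      apply box_mono
      apply conj_foldr_proj
      rw [← unbox_box ξ]
      exact List.mem_map.2 ⟨Formula.box ξ, hq, rfl⟩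
    set ctx : List Formula := [Pc, b, Formula.box ξc, Xd.neg, Formula.box Xd.neg]
      with hctx
    have dd : Dv ctx Formula.bot := by
      refine Dv.ofImp (fun x hx => ?_) hd
      have hNcase : x ∈ N → Dv ctx x := by
        intro hxN
        obtain ⟨X, hX, hshape⟩ := hxN
        have hXxs : X ∈ xs := by
          refine List.mem_map.2 ⟨x, List.mem_filter.2 ⟨hx, ?_⟩, ?_⟩
          · simp; exact ⟨X, hX, hshape⟩
          · rcases hshape with h' | h' <;> (subst h'; simp [strip_neg, strip_box_neg])
        have himp : Pr (X.impl Xd) := disj_foldr_intro hXxs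
        rcases hshape with h' | h'
        · subst h'
          exact Dv.mp (Dv.thm himp.contrapos) (Dv.ax (by simp [hctx]))
        · subst h'
          exact Dv.mp (Dv.thm (box_mono himp.contrapos)) (Dv.ax (by simp [hctx]))
      rcases hL x hx with h | h
      · subst h; exact Dv.ax (by simp [hctx])
      · rcases h with h | h
        · rcases h with h | h
          · exact hNcase h
          · by_cases hxN : x ∈ N
            · exact hNcase hxN
            · have hxP : x ∈ lP := List.mem_filter.2 ⟨hx, by simp; exact ⟨h, hxN⟩⟩
              exact Dv.mp (Dv.thm (conj_foldr_proj hxP)) (Dv.ax (by simp [hctx, hPc]))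
        · by_cases hxN : x ∈ N
          · exact hNcase hxN
          · by_cases hxP : Formula.box x ∈ Γ
            · have hxP' : x ∈ lP := List.mem_filter.2 ⟨hx, by simp; exact ⟨hxP, hxN⟩⟩
              exact Dv.mp (Dv.thm (conj_foldr_proj hxP')) (Dv.ax (by simp [hctx, hPc]))
            · have hxQ : x ∈ lQ := List.mem_filter.2 ⟨hx, by
                simp [hQ]
                simp [hQ] at h
                exact ⟨⟨h.1, h.2⟩, hxN, hxP⟩⟩
              exact Dv.mp (Dv.thm (hQimp x hxQ)) (Dv.ax (by simp [hctx]))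
    have d3 : Dv [Pc, b, Formula.box ξc] (Xd.disj (Formula.dia Xd)) := dd
    have dθ : Dv [Pc] ((b.conj (Formula.box ξc)).impl (Xd.disj (Formula.dia Xd))) := by
      apply Dv.pop (a := b.conj (Formula.box ξc))
      set c2 : List Formula := [b.conj (Formula.box ξc), Pc] with hc2
      have e0 : Dv c2 (b.impl ((Formula.box ξc).impl (Xd.disj (Formula.dia Xd)))) :=
        Dv.mp (Dv.thm (d3 : Pr _)) (Dv.ax (by simp [hc2]))
      have ec : Dv c2 (b.conj (Formula.box ξc)) := Dv.ax (by simp [hc2])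
      have := Dv.mp (Dv.mp e0 (Dv.conjE1 ec)) (Dv.conjE2 ec)
      exact Dv.mono (L := c2) (by intro x hx; simp [hc2] at hx ⊢; tauto) this
    have dθ' : Pr (Pc.impl ((b.conj (Formula.box ξc)).impl (Xd.disj (Formula.dia Xd)))) := dθ
    have hboxθ :
        Formula.box ((b.conj (Formula.box ξc)).impl (Xd.disj (Formula.dia Xd))) ∈ Γ :=
      hΓ.mp_mem (hΓ.mem_of_prov (box_mono dθ')) (hΓ.box_foldr_conj_mem hlPmem)
    have h1 : Formula.rhd (b.conj (Formula.box ξc)) (Xd.disj (Formula.dia Xd)) ∈ Γ :=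
      hΓ.mp_mem (hΓ.mem_of_prov (ILProof.J1 _ _)) hboxθ
    have h2 : Formula.rhd (b.conj (Formula.box ξc)) Xd ∈ Γ :=
      hΓ.rhd_trans_mem h1 (hΓ.mem_of_prov (pr_disj_dia_rhd Xd))
    have h3 : Formula.rhd (b.conj (Formula.box ξc)) c ∈ Γ :=
      hΓ.rhd_trans_mem h2 (hΓ.rhd_foldr_disj_mem hxsmem)
    have h4 : Formula.rhd (a.conj (Formula.box ξc)) (b.conj (Formula.box ξc)) ∈ Γ :=
      hΓ.M_mem hab
    have h5 : Formula.rhd (a.conj (Formula.box ξc)) c ∈ Γ := hΓ.rhd_trans_mem h4 h3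
    have h6 : (a.conj (Formula.box ξc)).neg ∈ Δ := (hcrit _ h5).1
    have h7 : a.conj (Formula.box ξc) ∈ Δ := hΔ.conj_mem_iff.2 ⟨haΔ, hboxξ⟩
    exact hΔ.not_both h7 h6
  obtain ⟨Λ, hTΛ, hΛ⟩ := lindenbaum hcons
  refine ⟨Λ, hΛ, ?_, ?_, ?_, ?_⟩
  · intro ψ hψ
    have m1 : ψ ∈ T :=
      Set.mem_insert_of_mem _ (Set.mem_union_left _ (Set.mem_union_right _ hψ))
    have m2 : Formula.box ψ ∈ T :=
      Set.mem_insert_of_mem _ (Set.mem_union_left _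
        (Set.mem_union_right _ (hΓ.box_box_mem hψ)))
    exact ⟨hTΛ m1, hTΛ m2⟩
  · intro X hX
    constructor
    · exact hTΛ (Set.mem_insert_of_mem _ (Set.mem_union_left _
        (Set.mem_union_left _ ⟨X, hX, Or.inl rfl⟩)))
    · exact hTΛ (Set.mem_insert_of_mem _ (Set.mem_union_left _
        (Set.mem_union_left _ ⟨X, hX, Or.inr rfl⟩)))
  · exact hTΛ (Set.mem_insert _ _)
  · intro ψ hψ
    exact hTΛ (Set.mem_insert_of_mem _ (Set.mem_union_right _ ⟨⟨ψ, rfl⟩, hψ⟩))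
/-! ### Generalized Veltman semantics -/

structure GVModel where
  W : Type
  R : W → W → Prop
  S : W → W → Set W → Prop
  val : ℕ → W → Prop
  trans : ∀ {x y z}, R x y → R y z → R x z
  wf : WellFounded (fun x y => R y x)
  S_R : ∀ {w u V}, S w u V → R w u
  S_ne : ∀ {w u V}, S w u V → V.Nonempty
  S_sub : ∀ {w u V}, S w u V → ∀ v ∈ V, R w v
  S_refl : ∀ {w u}, R w u → S w u {u}
  S_J5 : ∀ {w u v}, R w u → R u v → S w u {v}
  S_J2 : ∀ {w u V} {Z : W → Set W}, S w u V → (∀ v ∈ V, S w v (Z v)) →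
    S w u (⋃ v ∈ V, Z v)
  S_M : ∀ {w u V}, S w u V → ∃ V', V' ⊆ V ∧ S w u V' ∧ ∀ v ∈ V', ∀ z, R v z → R u z

def GVModel.sat (M : GVModel) : M.W → Formula → Prop
  | _, .bot => False
  | w, .var n => M.val n w
  | w, .impl a b => M.sat w a → M.sat w b
  | w, .box a => ∀ u, M.R w u → M.sat u a
  | w, .rhd a b => ∀ u, M.R w u → M.sat u a →
      ∃ V, M.S w u V ∧ ∀ v ∈ V, M.sat v b

theorem GVModel.sat_neg (M : GVModel) (w : M.W) (a : Formula) :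
    M.sat w a.neg ↔ ¬ M.sat w a := by
  simp [Formula.neg, GVModel.sat]

theorem GVModel.sat_conj (M : GVModel) (w : M.W) (a b : Formula) :
    M.sat w (a.conj b) ↔ M.sat w a ∧ M.sat w b := by
  simp only [Formula.conj, Formula.neg, GVModel.sat]
  tauto

theorem GVModel.sat_disj (M : GVModel) (w : M.W) (a b : Formula) :
    M.sat w (a.disj b) ↔ M.sat w a ∨ M.sat w b := by
  simp only [Formula.disj, Formula.neg, GVModel.sat]
  tauto

theorem GVModel.sat_dia (M : GVModel) (w : M.W) (a : Formula) :
    M.sat w (Formula.dia a) ↔ ∃ u, M.R w u ∧ M.sat u a := by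
  constructor
  · intro h
    by_contra hc
    push_neg at hc
    exact (h : (∀ u, M.R w u → (M.sat u a → False)) → False)
      (fun u hu ha => hc u hu ha)
  · rintro ⟨u, hu, ha⟩
    intro hbox
    exact (hbox : ∀ u, M.R w u → (M.sat u a → False)) u hu ha

theorem GVModel.sat_top (M : GVModel) (w : M.W) : M.sat w Formula.top := by
  simp [Formula.top, Formula.neg, GVModel.sat]

/-- Soundness of IL(M) over such models. -/
theorem soundness {φ : Formula} (h : Pr φ) (M : GVModel) : ∀ w, M.sat w φ := by
  induction h with
  | ax hφ =>
    obtain ⟨A, B, C, rfl⟩ := hφ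
    intro w hAB u hu hACu
    rw [M.sat_conj] at hACu
    obtain ⟨V, hSV, hV⟩ := hAB u hu hACu.1
    obtain ⟨V', hV'sub, hSV', hV'R⟩ := M.S_M hSV
    refine ⟨V', hSV', fun v hv => ?_⟩
    rw [M.sat_conj]
    refine ⟨hV v (hV'sub hv), ?_⟩
    intro z hz
    exact hACu.2 z (hV'R v hv z hz)
  | k1 a b => intro w ha _; exact ha
  | k2 a b c => intro w h1 h2 h3; exact h1 h3 (h2 h3)
  | dne a =>
    intro w h
    by_contra hc
    exact (h : (M.sat w a → False) → False) hc
  | L1 a b => intro w h1 h2 u hu; exact h1 u hu (h2 u hu)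
  | L2 a => intro w h u hu v hv; exact h v (M.trans hu hv)
  | L3 a =>
    intro w h u hu
    exact M.wf.induction (C := fun v => M.R w v → M.sat v a) u
      (fun x IH hx => h x hx (fun v hv => IH v hv (M.trans hx hv))) hu
  | J1 a b =>
    intro w h u hu ha
    refine ⟨{u}, M.S_refl hu, ?_⟩
    intro v hv
    rcases hv with rfl
    exact h _ hu ha
  | J2 a b c =>
    intro w h
    rw [M.sat_conj] at h
    intro u hu ha
    obtain ⟨V, hSV, hV⟩ := h.1 u hu ha
    classical
    have choice : ∀ v, ∃ Z, v ∈ V → M.S w v Z ∧ ∀ z ∈ Z, M.sat z c := by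
      intro v
      by_cases hv : v ∈ V
      · obtain ⟨Z, hZ⟩ := h.2 v (M.S_sub hSV v hv) (hV v hv)
        exact ⟨Z, fun _ => hZ⟩
      · exact ⟨∅, fun hvv => absurd hvv hv⟩
    choose Z hZ using choice
    refine ⟨⋃ v ∈ V, Z v, M.S_J2 hSV (fun v hv => (hZ v hv).1), ?_⟩
    intro z hz
    simp only [Set.mem_iUnion] at hz
    obtain ⟨v, hv, hzv⟩ := hz
    exact (hZ v hv).2 z hzv
  | J3 a b c =>
    intro w h
    rw [M.sat_conj] at h
    intro u hu hab
    rw [M.sat_disj] at hab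
    rcases hab with ha | hb
    · exact h.1 u hu ha
    · exact h.2 u hu hb
  | J4 a b =>
    intro w h hda
    rw [M.sat_dia] at hda
    obtain ⟨u, hu, ha⟩ := hda
    obtain ⟨V, hSV, hV⟩ := h u hu ha
    obtain ⟨v, hv⟩ := M.S_ne hSV
    rw [M.sat_dia]
    exact ⟨v, M.S_sub hSV v hv, hV v hv⟩
  | J5 a =>
    intro w u hu hda
    rw [M.sat_dia] at hda
    obtain ⟨v, hv, ha⟩ := hda
    refine ⟨{v}, M.S_J5 hu hv, ?_⟩
    intro z hz
    rcases hz with rfl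
    exact ha
  | mp h1 h2 ih1 ih2 => intro w; exact ih1 w (ih2 w)
  | nec h ih => intro w u _; exact ih u
/-! ### Canonical model -/

def World : Type := {Γ : Set Formula // MCS Mschema Γ}

open Classical in
noncomputable def rnk (Dfin : List Formula) (Γ : Set Formula) : ℕ :=
  (Dfin.filter (fun f => decide (f ∈ Γ))).length

theorem rnk_le (Dfin : List Formula) (Γ : Set Formula) :
    rnk Dfin Γ ≤ Dfin.length := List.length_filter_le _ _

theorem rnk_cons_mem {a : Formula} {Γ : Set Formula} (l : List Formula) (h : a ∈ Γ) :
    rnk (a :: l) Γ = rnk l Γ + 1 := by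
  simp only [rnk, List.filter_cons]
  rw [if_pos (by simpa using h)]
  simp

theorem rnk_cons_not {a : Formula} {Γ : Set Formula} (l : List Formula) (h : a ∉ Γ) :
    rnk (a :: l) Γ = rnk l Γ := by
  simp only [rnk, List.filter_cons]
  rw [if_neg (by simpa using h)]

theorem rnk_mono {Dfin : List Formula} {Γ Δ : Set Formula}
    (h : ∀ f ∈ Dfin, f ∈ Γ → f ∈ Δ) : rnk Dfin Γ ≤ rnk Dfin Δ := by
  classical
  induction Dfin with
  | nil => simp [rnk]
  | cons a l ih =>
    have ih' := ih (fun f hf => h f (List.mem_cons_of_mem _ hf))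
    by_cases ha : a ∈ Γ
    · have haΔ : a ∈ Δ := h a (List.mem_cons_self) ha
      rw [rnk_cons_mem l ha, rnk_cons_mem l haΔ]; omega
    · by_cases haΔ : a ∈ Δ
      · rw [rnk_cons_not l ha, rnk_cons_mem l haΔ]; omega
      · rw [rnk_cons_not l ha, rnk_cons_not l haΔ]; omega

theorem rnk_strict {Dfin : List Formula} {Γ Δ : Set Formula}
    (h : ∀ f ∈ Dfin, f ∈ Γ → f ∈ Δ) {g : Formula} (hg : g ∈ Dfin)
    (hgΔ : g ∈ Δ) (hgΓ : g ∉ Γ) : rnk Dfin Γ < rnk Dfin Δ := by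
  classical
  induction Dfin with
  | nil => cases hg
  | cons a l ih =>
    have hmono : ∀ f ∈ l, f ∈ Γ → f ∈ Δ := fun f hf => h f (List.mem_cons_of_mem _ hf)
    rcases List.mem_cons.1 hg with rfl | hg'
    · have hl := rnk_mono (Dfin := l) hmono
      rw [rnk_cons_not l hgΓ, rnk_cons_mem l hgΔ]; omega
    · have ih' := ih hmono hg'
      by_cases ha : a ∈ Γ
      · have haΔ : a ∈ Δ := h a (List.mem_cons_self) ha
        rw [rnk_cons_mem l ha, rnk_cons_mem l haΔ]; omega
      · by_cases haΔ : a ∈ Δ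
        · rw [rnk_cons_not l ha, rnk_cons_mem l haΔ]; omega
        · rw [rnk_cons_not l ha, rnk_cons_not l haΔ]; omega

/-- boxSub gives rank monotonicity when all elements of Dfin are boxes. -/
theorem rnk_mono_boxSub {Dfin : List Formula}
    (hshape : ∀ f ∈ Dfin, ∃ a, f = Formula.box a) {Γ Δ : Set Formula}
    (h : boxSub Γ Δ) : rnk Dfin Γ ≤ rnk Dfin Δ := by
  apply rnk_mono
  intro f hf hfΓ
  obtain ⟨a, rfl⟩ := hshape f hf
  exact h a hfΓ

theorem prec_boxSub {Γ Δ : Set Formula} (h : prec Γ Δ) : boxSub Γ Δ :=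
  fun a ha => (h a ha).2

theorem prec_trans {Γ Δ Λ : Set Formula} (h1 : prec Γ Δ) (h2 : prec Δ Λ) :
    prec Γ Λ := fun a ha => h2 a (h1 a ha).2

theorem critSucc_prec {C : Formula} {Γ Δ Λ : Set Formula}
    (h1 : critSucc C Γ Δ) (h2 : prec Δ Λ) : critSucc C Γ Λ := by
  intro X hX
  obtain ⟨_, hbox⟩ := h1 X hX
  exact h2 X.neg hbox

section Canon

variable (Dfin : List Formula)

def cR (x y : World) : Prop :=
  prec x.1 y.1 ∧ rnk Dfin x.1 < rnk Dfin y.1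

def cS (w u : World) (V : Set World) : Prop :=
  cR Dfin w u ∧ V.Nonempty ∧ (∀ v ∈ V, cR Dfin w v) ∧
    ∀ C, critSucc C w.1 u.1 → ∃ Λ ∈ V, critSucc C w.1 Λ.1 ∧ boxSub u.1 Λ.1

variable (hshape : ∀ f ∈ Dfin, ∃ a, f = Formula.box a)

theorem cR_trans {x y z : World} (h1 : cR Dfin x y) (h2 : cR Dfin y z) :
    cR Dfin x z := ⟨prec_trans h1.1 h2.1, h1.2.trans h2.2⟩

theorem cR_wf : WellFounded (fun x y => cR Dfin y x) := by
  have : ∀ x y : World, cR Dfin y x →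
      (Dfin.length - rnk Dfin x.1) < (Dfin.length - rnk Dfin y.1) := by
    intro x y h
    have h1 : rnk Dfin y.1 < rnk Dfin x.1 := h.2
    have h2 : rnk Dfin x.1 ≤ Dfin.length := rnk_le _ _
    omega
  exact Subrelation.wf (fun {x y} h => this x y h)
    (InvImage.wf (fun x : World => Dfin.length - rnk Dfin x.1) Nat.lt_wfRel.wf)

include hshape in
/-- The canonical generalized Veltman model. -/
noncomputable def CM : GVModel where
  W := World
  R := cR Dfin
  S := cS Dfin
  val := fun n w => Formula.var n ∈ w.1
  trans := fun h1 h2 => cR_trans Dfin h1 h2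
  wf := cR_wf Dfin
  S_R := fun h => h.1
  S_ne := fun h => h.2.1
  S_sub := fun h => h.2.2.1
  S_refl := by
    intro w u h
    refine ⟨h, ⟨u, rfl⟩, ?_, ?_⟩
    · intro v hv; rcases hv with rfl; exact h
    · intro C hC
      exact ⟨u, rfl, hC, fun a ha => ha⟩
  S_J5 := by
    intro w u v hwu huv
    refine ⟨hwu, ⟨v, rfl⟩, ?_, ?_⟩
    · intro z hz; rcases hz with rfl; exact cR_trans Dfin hwu huv
    · intro C hC
      exact ⟨v, rfl, critSucc_prec hC huv.1, prec_boxSub huv.1⟩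
  S_J2 := by
    intro w u V Z h hZ
    refine ⟨h.1, ?_, ?_, ?_⟩
    · obtain ⟨v, hv⟩ := h.2.1
      obtain ⟨z, hz⟩ := (hZ v hv).2.1
      exact ⟨z, Set.mem_biUnion hv hz⟩
    · intro z hz
      simp only [Set.mem_iUnion] at hz
      obtain ⟨v, hv, hzv⟩ := hz
      exact (hZ v hv).2.2.1 z hzv
    · intro C hC
      obtain ⟨Λ, hΛV, hΛcrit, hΛbox⟩ := h.2.2.2 C hC
      obtain ⟨Ξ, hΞZ, hΞcrit, hΞbox⟩ := (hZ Λ hΛV).2.2.2 C hΛcrit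
      exact ⟨Ξ, Set.mem_biUnion hΛV hΞZ, hΞcrit, fun a ha => hΞbox a (hΛbox a ha)⟩
  S_M := by
    intro w u V h
    refine ⟨{Λ ∈ V | boxSub u.1 Λ.1}, fun Λ hΛ => hΛ.1, ⟨h.1, ?_, ?_, ?_⟩, ?_⟩
    · -- nonempty via ⊥-criticality
      obtain ⟨Λ, hΛV, hΛcrit, hΛbox⟩ := h.2.2.2 Formula.bot
        (crit_bot w.2 h.1.1)
      exact ⟨Λ, hΛV, hΛbox⟩
    · intro v hv; exact h.2.2.1 v hv.1
    · intro C hC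
      obtain ⟨Λ, hΛV, hΛcrit, hΛbox⟩ := h.2.2.2 C hC
      exact ⟨Λ, ⟨hΛV, hΛbox⟩, hΛcrit, hΛbox⟩
    · intro v hv z hz
      constructor
      · intro a ha
        exact hz.1 a (hv.2 a ha)
      · exact lt_of_le_of_lt (rnk_mono_boxSub hshape hv.2) hz.2

end Canon
/-! ### Truth lemma -/

section Truth

variable (Dfin : List Formula) (hshape : ∀ f ∈ Dfin, ∃ a, f = Formula.box a)

theorem prec_rnk_mono (hsh : ∀ f ∈ Dfin, ∃ a, f = Formula.box a)
    {Γ Δ : Set Formula} (hp : prec Γ Δ) :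
    ∀ f ∈ Dfin, f ∈ Γ → f ∈ Δ := by
  intro f hf hfΓ
  obtain ⟨a, rfl⟩ := hsh f hf
  exact (hp a hfΓ).2

include hshape in
theorem exists_cR_box {w : World} {C : Formula} (hDf : Formula.box C ∈ Dfin)
    (hC : Formula.box C ∉ w.1) :
    ∃ u : World, cR Dfin w u ∧ C.neg ∈ u.1 := by
  obtain ⟨Δ, hΔ, hp, hneg, hbox, _⟩ := exists_succ_box w.2 hC
  exact ⟨⟨Δ, hΔ⟩, ⟨hp, rnk_strict (prec_rnk_mono Dfin hshape hp) hDf hbox hC⟩, hneg⟩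

include hshape in
theorem exists_cR_crit {w : World} {a b : Formula} (hDf : Formula.box a.neg ∈ Dfin)
    (hab : Formula.rhd a b ∉ w.1) :
    ∃ u : World, cR Dfin w u ∧ critSucc b w.1 u.1 ∧ a ∈ u.1 := by
  obtain ⟨Δ, hΔ, hp, hcrit, ha, hbox⟩ := exists_crit_succ w.2 hab
  have hnot : Formula.box a.neg ∉ w.1 := by
    intro hmem
    exact hab (w.2.mp_mem (w.2.mem_of_prov (pr_boxneg_imp_rhd a b)) hmem)
  exact ⟨⟨Δ, hΔ⟩, ⟨hp, rnk_strict (prec_rnk_mono Dfin hshape hp) hDf hbox hnot⟩,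
    hcrit, ha⟩

include hshape in
theorem exists_cR_M {w u : World} {a b C : Formula} (hab : Formula.rhd a b ∈ w.1)
    (hcr : cR Dfin w u) (hcrit : critSucc C w.1 u.1) (ha : a ∈ u.1) :
    ∃ Λ : World, cR Dfin w Λ ∧ critSucc C w.1 Λ.1 ∧ b ∈ Λ.1 ∧ boxSub u.1 Λ.1 := by
  obtain ⟨Λ, hΛ, hp, hcritΛ, hb, hboxΛ⟩ := exists_M_succ w.2 u.2 hab hcr.1 hcrit ha
  refine ⟨⟨Λ, hΛ⟩, ⟨hp, ?_⟩, hcritΛ, hb, hboxΛ⟩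
  exact lt_of_lt_of_le hcr.2 (rnk_mono_boxSub hshape hboxΛ)

variable (D : Set Formula)
  (hclo_impl : ∀ {a b : Formula}, a.impl b ∈ D → a ∈ D ∧ b ∈ D)
  (hclo_box : ∀ {a : Formula}, Formula.box a ∈ D → a ∈ D)
  (hclo_rhd : ∀ {a b : Formula}, Formula.rhd a b ∈ D → a ∈ D ∧ b ∈ D)
  (hDbox : ∀ {a : Formula}, Formula.box a ∈ D → Formula.box a ∈ Dfin)
  (hDrhd : ∀ {a b : Formula}, Formula.rhd a b ∈ D → Formula.box a.neg ∈ Dfin)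

include hshape hclo_impl hclo_box hclo_rhd hDbox hDrhd in
theorem truth_lemma : ∀ φ : Formula, φ ∈ D → ∀ w : World,
    ((CM Dfin hshape).sat w φ ↔ φ ∈ w.1) := by
  intro φ
  induction φ with
  | bot =>
    intro _ w
    constructor
    · intro h; exact absurd (h : False) not_false
    · intro h; exact w.2.bot_not_mem h
  | var n => intro _ w; exact Iff.rfl
  | impl a b iha ihb =>
    intro hD w
    obtain ⟨haD, hbD⟩ := hclo_impl hD
    constructor
    · intro h
      refine w.2.impl_mem_iff.2 (fun ha => ?_)
      exact (ihb hbD w).1 (h ((iha haD w).2 ha))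
    · intro h hsa
      exact (ihb hbD w).2 (w.2.mp_mem h ((iha haD w).1 hsa))
  | box a ih =>
    intro hD w
    constructor
    · intro hsat
      by_contra hmem
      obtain ⟨u, hcR, hneg⟩ := exists_cR_box Dfin hshape (hDbox hD) hmem
      have hau : a ∈ u.1 := (ih (hclo_box hD) u).1 (hsat u hcR)
      exact u.2.not_both hau hneg
    · intro hmem u hu
      exact (ih (hclo_box hD) u).2 (hu.1 a hmem).1
  | rhd a b iha ihb =>
    intro hD w
    obtain ⟨haD, hbD⟩ := hclo_rhd hD
    constructor
    · intro hsat
      by_contra hmem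
      obtain ⟨u, hcR, hcrit, hau⟩ := exists_cR_crit Dfin hshape (hDrhd hD) hmem
      obtain ⟨V, hS, hV⟩ := hsat u hcR ((iha haD u).2 hau)
      obtain ⟨Λ, hΛV, hΛcrit, _⟩ := (hS : cS Dfin w u V).2.2.2 b hcrit
      have hbb : Formula.rhd b b ∈ w.1 := w.2.mem_of_prov (pr_rhd_self b)
      have hnb : b.neg ∈ Λ.1 := (hΛcrit b hbb).1
      have hbΛ : b ∈ Λ.1 := (ihb hbD Λ).1 (hV Λ hΛV)
      exact Λ.2.not_both hbΛ hnb
    · intro hmem u hu hsata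
      have hau : a ∈ u.1 := (iha haD u).1 hsata
      refine ⟨{Λ : World | cR Dfin w Λ ∧ b ∈ Λ.1 ∧ boxSub u.1 Λ.1},
        (⟨hu, ?_, fun v hv => hv.1, ?_⟩ : cS Dfin w u _), ?_⟩
      · obtain ⟨Λ, h1, h2, h3, h4⟩ := exists_cR_M Dfin hshape hmem hu
          (crit_bot w.2 (hu : cR Dfin w u).1) hau
        exact ⟨Λ, h1, h3, h4⟩
      · intro C hC
        obtain ⟨Λ, h1, h2, h3, h4⟩ := exists_cR_M Dfin hshape hmem hu hC hau
        exact ⟨Λ, ⟨h1, h3, h4⟩, h2, h4⟩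
      · intro v hv
        exact (ihb hbD v).2 hv.2.1

end Truth
/-! ### Glued model -/

section Glue

variable (Dfin : List Formula) (hshape : ∀ f ∈ Dfin, ∃ a, f = Formula.box a)
variable (G : ℕ → World)

abbrev GW : Type := Option (ℕ × World)

def img (i : ℕ) (V : Set World) : Set GW := (fun z => (some (i, z) : GW)) '' V

def rootSee (i : ℕ) (x : World) : Prop :=
  match i with
  | 0 => cR Dfin (G 0) x
  | Nat.succ k => x = G (k+1) ∨ cR Dfin (G (k+1)) x

def gR : GW → GW → Prop
  | some p, some q => p.1 = q.1 ∧ cR Dfin p.2 q.2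
  | none, some q => rootSee Dfin G q.1 q.2
  | _, none => False

def rootS (i : ℕ) (y : World) (Vs : Set GW) : Prop :=
  match i with
  | 0 => ∃ V, cS Dfin (G 0) y V ∧ Vs = img 0 V
  | Nat.succ k => (y = G (k+1) ∨ cR Dfin (G (k+1)) y) ∧
      ∃ V, Vs = img (k+1) V ∧ V.Nonempty ∧
        (∀ v ∈ V, v = G (k+1) ∨ cR Dfin (G (k+1)) v) ∧ ∃ Λ ∈ V, boxSub y.1 Λ.1

def gS : GW → GW → Set GW → Prop
  | some p, some q, Vs => p.1 = q.1 ∧ ∃ V, cS Dfin p.2 q.2 V ∧ Vs = img p.1 V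
  | none, some q, Vs => rootS Dfin G q.1 q.2 Vs
  | _, none, _ => False

theorem mem_img {i : ℕ} {V : Set World} {v : GW} :
    v ∈ img i V ↔ ∃ z ∈ V, v = some (i, z) := by
  constructor
  · rintro ⟨z, hz, rfl⟩; exact ⟨z, hz, rfl⟩
  · rintro ⟨z, hz, rfl⟩; exact ⟨z, hz, rfl⟩

theorem img_singleton (i : ℕ) (z : World) : img i {z} = {some (i, z)} := by
  simp [img]

theorem img_iUnion {i : ℕ} {V : Set World} {Z : GW → Set GW} {Z0 : World → Set World}
    (hZ : ∀ z ∈ V, Z (some (i, z)) = img i (Z0 z)) :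
    (⋃ v ∈ img i V, Z v) = img i (⋃ z ∈ V, Z0 z) := by
  ext gw
  simp only [Set.mem_iUnion]
  constructor
  · rintro ⟨v, hvV, hgw⟩
    obtain ⟨z, hz, rfl⟩ := mem_img.1 hvV
    rw [hZ z hz, mem_img] at hgw
    obtain ⟨t, ht, rfl⟩ := hgw
    refine mem_img.2 ⟨t, ?_, rfl⟩
    exact Set.mem_biUnion hz ht
  · intro hgw
    obtain ⟨t, ht, rfl⟩ := mem_img.1 hgw
    simp only [Set.mem_iUnion] at ht
    obtain ⟨z, hz, htz⟩ := ht
    refine ⟨some (i, z), mem_img.2 ⟨z, hz, rfl⟩, ?_⟩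
    rw [hZ z hz, mem_img]
    exact ⟨t, htz, rfl⟩

theorem cone_trans {i : ℕ} {x y : World}
    (h : x = G i ∨ cR Dfin (G i) x) (hxy : cR Dfin x y) :
    cR Dfin (G i) y := by
  rcases h with rfl | h
  · exact hxy
  · exact cR_trans Dfin h hxy

theorem rootSee_trans {i : ℕ} {x y : World} (h : rootSee Dfin G i x)
    (hxy : cR Dfin x y) : rootSee Dfin G i y := by
  cases i with
  | zero => exact cR_trans Dfin h hxy
  | succ k => exact Or.inr (cone_trans Dfin G h hxy)

/-- The glued model. -/
noncomputable def GM : GVModel where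
  W := GW
  R := gR Dfin G
  S := gS Dfin G
  val := fun n w => match w with
    | some p => Formula.var n ∈ p.2.1
    | none => False
  trans := by
    intro a b c h1 h2
    cases a with
    | none =>
      cases b with
      | none => exact h1.elim
      | some q =>
        cases c with
        | none => exact h2.elim
        | some r =>
          obtain ⟨j, y⟩ := q
          obtain ⟨k, z⟩ := r
          obtain ⟨hjk, hyz⟩ := h2
          have hjk' : j = k := hjk
          subst hjk'
          exact rootSee_trans Dfin G h1 hyz
    | some p =>
      cases b with
      | none => exact h1.elim
      | some q =>
        cases c with
        | none => exact h2.elim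
        | some r =>
          obtain ⟨i, x⟩ := p
          obtain ⟨j, y⟩ := q
          obtain ⟨k, z⟩ := r
          obtain ⟨hij, hxy⟩ := h1
          obtain ⟨hjk, hyz⟩ := h2
          have hij' : i = j := hij
          have hjk' : j = k := hjk
          subst hij'; subst hjk'
          exact ⟨rfl, cR_trans Dfin hxy hyz⟩
  wf := by
    have key : ∀ a b : GW, gR Dfin G b a →
        (match a with
          | none => Dfin.length + 1
          | some p => Dfin.length - rnk Dfin p.2.1) <
        (match b with
          | none => Dfin.length + 1
          | some p => Dfin.length - rnk Dfin p.2.1) := by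
      intro a b h
      cases a with
      | none => cases b with
        | none => exact h.elim
        | some p => exact h.elim
      | some p =>
        cases b with
        | none =>
          have := rnk_le Dfin p.2.1
          simp only
          omega
        | some q =>
          obtain ⟨hji, hr⟩ := h
          have h1 : rnk Dfin q.2.1 < rnk Dfin p.2.1 := hr.2
          have h2 := rnk_le Dfin p.2.1
          simp only
          omega
    exact Subrelation.wf (fun {a b} h => key a b h)
      (InvImage.wf _ Nat.lt_wfRel.wf)
  S_R := by
    intro w u Vs h
    cases w with
    | none =>
      cases u with
      | none => exact h.elim
      | some q =>
        obtain ⟨j, y⟩ := q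
        cases j with
        | zero =>
          obtain ⟨V, hV, rfl⟩ := h
          exact hV.1
        | succ k => exact h.1
    | some p =>
      cases u with
      | none => exact h.elim
      | some q => exact ⟨h.1, h.2.choose_spec.1.1⟩
  S_ne := by
    intro w u Vs h
    cases w with
    | none =>
      cases u with
      | none => exact h.elim
      | some q =>
        obtain ⟨j, y⟩ := q
        cases j with
        | zero =>
          obtain ⟨V, hV, rfl⟩ := h
          obtain ⟨z, hz⟩ := hV.2.1
          exact ⟨some (0, z), mem_img.2 ⟨z, hz, rfl⟩⟩
        | succ k =>
          obtain ⟨_, V, rfl, hne, _, _⟩ := h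
          obtain ⟨z, hz⟩ := hne
          exact ⟨some (k+1, z), mem_img.2 ⟨z, hz, rfl⟩⟩
    | some p =>
      cases u with
      | none => exact h.elim
      | some q =>
        obtain ⟨hij, V, hV, rfl⟩ := h
        obtain ⟨z, hz⟩ := hV.2.1
        exact ⟨some (p.1, z), mem_img.2 ⟨z, hz, rfl⟩⟩
  S_sub := by
    intro w u Vs h v hv
    cases w with
    | none =>
      cases u with
      | none => exact h.elim
      | some q =>
        obtain ⟨j, y⟩ := q
        cases j with
        | zero =>
          obtain ⟨V, hV, rfl⟩ := h
          obtain ⟨z, hz, rfl⟩ := mem_img.1 hv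
          exact hV.2.2.1 z hz
        | succ k =>
          obtain ⟨_, V, rfl, _, hcone, _⟩ := h
          obtain ⟨z, hz, rfl⟩ := mem_img.1 hv
          exact hcone z hz
    | some p =>
      cases u with
      | none => exact h.elim
      | some q =>
        obtain ⟨hij, V, hV, rfl⟩ := h
        obtain ⟨z, hz, rfl⟩ := mem_img.1 hv
        exact ⟨rfl, hV.2.2.1 z hz⟩
  S_refl := by
    intro w u h
    cases w with
    | none =>
      cases u with
      | none => exact h.elim
      | some q =>
        obtain ⟨j, y⟩ := q
        cases j with
        | zero =>
          refine ⟨{y}, (CM Dfin hshape).S_refl h, ?_⟩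
          rw [img_singleton]
        | succ k =>
          refine ⟨h, {y}, (img_singleton _ _).symm, ⟨y, rfl⟩, ?_,
            ⟨y, rfl, fun a ha => ha⟩⟩
          intro v hv; rcases hv with rfl; exact h
    | some p =>
      cases u with
      | none => exact h.elim
      | some q =>
        obtain ⟨i, x⟩ := p
        obtain ⟨j, y⟩ := q
        obtain ⟨hij, hxy⟩ := h
        have hij' : i = j := hij
        subst hij'
        exact ⟨rfl, {y}, (CM Dfin hshape).S_refl hxy, (img_singleton _ _).symm⟩
  S_J5 := by
    intro w u v h1 h2
    cases w with
    | none =>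
      cases u with
      | none => exact h1.elim
      | some q =>
        cases v with
        | none => exact h2.elim
        | some r =>
          obtain ⟨j, y⟩ := q
          obtain ⟨k, z⟩ := r
          obtain ⟨hjk, hyz⟩ := h2
          have hjk' : j = k := hjk
          subst hjk'
          cases j with
          | zero =>
            exact ⟨{z}, (CM Dfin hshape).S_J5 h1 hyz, (img_singleton _ _).symm⟩
          | succ m =>
            refine ⟨h1, {z}, (img_singleton _ _).symm, ⟨z, rfl⟩, ?_,
              ⟨z, rfl, prec_boxSub hyz.1⟩⟩
            intro t ht; rcases ht with rfl
            exact Or.inr (cone_trans Dfin G h1 hyz)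
    | some p =>
      cases u with
      | none => exact h1.elim
      | some q =>
        cases v with
        | none => exact h2.elim
        | some r =>
          obtain ⟨i, x⟩ := p
          obtain ⟨j, y⟩ := q
          obtain ⟨k, z⟩ := r
          obtain ⟨hij, hxy⟩ := h1
          obtain ⟨hjk, hyz⟩ := h2
          have hij' : i = j := hij
          have hjk' : j = k := hjk
          subst hij'; subst hjk'
          exact ⟨rfl, {z}, (CM Dfin hshape).S_J5 hxy hyz, (img_singleton _ _).symm⟩
  S_J2 := by
    intro w u Vs Z h hZ
    classical
    cases w with
    | none =>
      cases u with
      | none => exact h.elim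
      | some q =>
        obtain ⟨j, y⟩ := q
        cases j with
        | zero =>
          obtain ⟨V, hV, rfl⟩ := h
          have hch : ∀ z : World, ∃ Vz : Set World, z ∈ V →
              cS Dfin (G 0) z Vz ∧ Z (some (0, z)) = img 0 Vz := by
            intro z
            by_cases hz : z ∈ V
            · obtain ⟨Vz, h1, h2⟩ := hZ (some (0, z)) (mem_img.2 ⟨z, hz, rfl⟩)
              exact ⟨Vz, fun _ => ⟨h1, h2⟩⟩
            · exact ⟨∅, fun h => absurd h hz⟩
          choose Z0 hZ0 using hch
          exact ⟨⋃ z ∈ V, Z0 z, (CM Dfin hshape).S_J2 hV (fun z hz => (hZ0 z hz).1),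
            img_iUnion (fun z hz => (hZ0 z hz).2)⟩
        | succ k =>
          obtain ⟨hcone, V, rfl, hne, hconeV, Λ, hΛV, hΛbox⟩ := h
          have hch : ∀ z : World, ∃ Vz : Set World, z ∈ V →
              (Z (some (k+1, z)) = img (k+1) Vz ∧ Vz.Nonempty ∧
                (∀ v ∈ Vz, v = G (k+1) ∨ cR Dfin (G (k+1)) v) ∧
                ∃ Ξ ∈ Vz, boxSub z.1 Ξ.1) := by
            intro z
            by_cases hz : z ∈ V
            · obtain ⟨_, Vz, h1, h2, h3, h4⟩ := hZ (some (k+1, z))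
                (mem_img.2 ⟨z, hz, rfl⟩)
              exact ⟨Vz, fun _ => ⟨h1, h2, h3, h4⟩⟩
            · exact ⟨∅, fun h => absurd h hz⟩
          choose Z0 hZ0 using hch
          refine ⟨hcone, ⋃ z ∈ V, Z0 z, img_iUnion (fun z hz => (hZ0 z hz).1),
            ?_, ?_, ?_⟩
          · obtain ⟨z, hz⟩ := hne
            obtain ⟨t, ht⟩ := (hZ0 z hz).2.1
            exact ⟨t, Set.mem_biUnion hz ht⟩
          · intro v hv
            simp only [Set.mem_iUnion] at hv
            obtain ⟨z, hz, hvz⟩ := hv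
            exact (hZ0 z hz).2.2.1 v hvz
          · obtain ⟨Ξ, hΞ, hΞbox⟩ := (hZ0 Λ hΛV).2.2.2
            exact ⟨Ξ, Set.mem_biUnion hΛV hΞ, fun a ha => hΞbox a (hΛbox a ha)⟩
    | some p =>
      cases u with
      | none => exact h.elim
      | some q =>
        obtain ⟨i, x⟩ := p
        obtain ⟨j, y⟩ := q
        obtain ⟨hij, V, hV, rfl⟩ := h
        have hch : ∀ z : World, ∃ Vz : Set World, z ∈ V →
            cS Dfin x z Vz ∧ Z (some (i, z)) = img i Vz := by
          intro z
          by_cases hz : z ∈ V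
          · obtain ⟨_, Vz, h1, h2⟩ := hZ (some (i, z)) (mem_img.2 ⟨z, hz, rfl⟩)
            exact ⟨Vz, fun _ => ⟨h1, h2⟩⟩
          · exact ⟨∅, fun h => absurd h hz⟩
        choose Z0 hZ0 using hch
        exact ⟨hij, ⋃ z ∈ V, Z0 z, (CM Dfin hshape).S_J2 hV (fun z hz => (hZ0 z hz).1),
          img_iUnion (fun z hz => (hZ0 z hz).2)⟩
  S_M := by
    intro w u Vs h
    cases w with
    | none =>
      cases u with
      | none => exact h.elim
      | some q =>
        obtain ⟨j, y⟩ := q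
        cases j with
        | zero =>
          obtain ⟨V, hV, rfl⟩ := h
          obtain ⟨V', hV'sub, hSV', hV'R⟩ := (CM Dfin hshape).S_M hV
          refine ⟨img 0 V', ?_, ⟨V', hSV', rfl⟩, ?_⟩
          · intro v hv
            obtain ⟨z, hz, rfl⟩ := mem_img.1 hv
            exact mem_img.2 ⟨z, hV'sub hz, rfl⟩
          · intro v hv z hz
            obtain ⟨t, ht, rfl⟩ := mem_img.1 hv
            cases z with
            | none => exact hz.elim
            | some r =>
              obtain ⟨hk, hts⟩ := hz
              exact ⟨hk, hV'R t ht r.2 hts⟩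
        | succ k =>
          obtain ⟨hcone, V, rfl, hne, hconeV, Λ, hΛV, hΛbox⟩ := h
          refine ⟨img (k+1) {t ∈ V | boxSub y.1 t.1}, ?_,
            ⟨hcone, {t ∈ V | boxSub y.1 t.1}, rfl, ⟨Λ, hΛV, hΛbox⟩, ?_,
              ⟨Λ, ⟨hΛV, hΛbox⟩, hΛbox⟩⟩, ?_⟩
          · intro v hv
            obtain ⟨z, hz, rfl⟩ := mem_img.1 hv
            exact mem_img.2 ⟨z, hz.1, rfl⟩
          · intro v hv
            exact hconeV v hv.1
          · intro v hv z hz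
            obtain ⟨t, ht, rfl⟩ := mem_img.1 hv
            cases z with
            | none => exact hz.elim
            | some r =>
              obtain ⟨hm, hts⟩ := hz
              exact ⟨hm, ⟨fun a ha => hts.1 a (ht.2 a ha),
                lt_of_le_of_lt (rnk_mono_boxSub hshape ht.2) hts.2⟩⟩
    | some p =>
      cases u with
      | none => exact h.elim
      | some q =>
        obtain ⟨i, x⟩ := p
        obtain ⟨j, y⟩ := q
        obtain ⟨hij, V, hV, rfl⟩ := h
        have hij' : i = j := hij
        subst hij'
        obtain ⟨V', hV'sub, hSV', hV'R⟩ := (CM Dfin hshape).S_M hV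
        refine ⟨img i V', ?_, ⟨rfl, V', hSV', rfl⟩, ?_⟩
        · intro v hv
          obtain ⟨z, hz, rfl⟩ := mem_img.1 hv
          exact mem_img.2 ⟨z, hV'sub hz, rfl⟩
        · intro v hv z hz
          obtain ⟨t, ht, rfl⟩ := mem_img.1 hv
          cases z with
          | none => exact hz.elim
          | some r =>
            obtain ⟨hk, hts⟩ := hz
            exact ⟨hk, hV'R t ht r.2 hts⟩

end Glue
/-! ### Piece truth transfer -/

theorem sat_foldr_conj (M : GVModel) (w : M.W) :
    ∀ (L : List Formula), (∀ ψ ∈ L, M.sat w ψ) →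
      M.sat w (L.foldr Formula.conj Formula.top)
  | [], _ => M.sat_top w
  | (a :: L), h => by
      show M.sat w (a.conj (L.foldr Formula.conj Formula.top))
      rw [M.sat_conj]
      exact ⟨h a (List.mem_cons_self),
        sat_foldr_conj M w L (fun ψ hψ => h ψ (List.mem_cons_of_mem _ hψ))⟩

section Transfer

variable (Dfin : List Formula) (hshape : ∀ f ∈ Dfin, ∃ a, f = Formula.box a)
variable (G : ℕ → World)

theorem piece_sat : ∀ (φ : Formula) (i : ℕ) (x : World),
    ((GM Dfin hshape G).sat (some (i, x)) φ ↔ (CM Dfin hshape).sat x φ) := by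
  intro φ
  induction φ with
  | bot => intro i x; exact Iff.rfl
  | var n => intro i x; exact Iff.rfl
  | impl a b iha ihb =>
    intro i x
    constructor
    · intro h hs
      exact (ihb i x).1 (h ((iha i x).2 hs))
    · intro h hs
      exact (ihb i x).2 (h ((iha i x).1 hs))
  | box a ih =>
    intro i x
    constructor
    · intro h u hu
      exact (ih i u).1 (h (some (i, u)) ⟨rfl, hu⟩)
    · intro h z hz
      cases z with
      | none => exact hz.elim
      | some r =>
        obtain ⟨j, u⟩ := r
        obtain ⟨hij, hu⟩ := hz
        have hij' : i = j := hij
        subst hij'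
        exact (ih i u).2 (h u hu)
  | rhd a b iha ihb =>
    intro i x
    constructor
    · intro h u hu hsa
      obtain ⟨Vs, hgS, hVb⟩ := h (some (i, u)) ⟨rfl, hu⟩ ((iha i u).2 hsa)
      obtain ⟨hii, V, hcS, rfl⟩ := hgS
      refine ⟨V, hcS, fun v hv => ?_⟩
      exact (ihb i v).1 (hVb (some (i, v)) (mem_img.2 ⟨v, hv, rfl⟩))
    · intro h z hz hsa
      cases z with
      | none => exact hz.elim
      | some r =>
        obtain ⟨j, u⟩ := r
        obtain ⟨hij, hu⟩ := hz
        have hij' : i = j := hij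
        subst hij'
        obtain ⟨V, hcS, hVb⟩ := h u hu ((iha i u).1 hsa)
        refine ⟨img i V, ⟨rfl, V, hcS, rfl⟩, fun v hv => ?_⟩
        obtain ⟨t, ht, rfl⟩ := mem_img.1 hv
        exact (ihb i t).2 (hVb t ht)

end Transfer

/-! ### Subformulas -/

def subf : Formula → List Formula
  | .bot => [.bot]
  | .var n => [.var n]
  | .impl a b => .impl a b :: (subf a ++ subf b)
  | .box a => .box a :: subf a
  | .rhd a b => .rhd a b :: (subf a ++ subf b)

theorem subf_self : ∀ φ : Formula, φ ∈ subf φ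
  | .bot => List.mem_cons_self
  | .var n => List.mem_cons_self
  | .impl a b => List.mem_cons_self
  | .box a => List.mem_cons_self
  | .rhd a b => List.mem_cons_self

theorem subf_trans : ∀ {φ ψ χ : Formula}, ψ ∈ subf φ → χ ∈ subf ψ → χ ∈ subf φ := by
  intro φ
  induction φ with
  | bot =>
    intro ψ χ hψ hχ
    simp [subf] at hψ
    subst hψ; exact hχ
  | var n =>
    intro ψ χ hψ hχ
    simp [subf] at hψ
    subst hψ; exact hχ
  | impl a b iha ihb =>
    intro ψ χ hψ hχ
    rcases List.mem_cons.1 hψ with rfl | hψ'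
    · exact hχ
    · rcases List.mem_append.1 hψ' with h | h
      · exact List.mem_cons_of_mem _ (List.mem_append_left _ (iha h hχ))
      · exact List.mem_cons_of_mem _ (List.mem_append_right _ (ihb h hχ))
  | box a iha =>
    intro ψ χ hψ hχ
    rcases List.mem_cons.1 hψ with rfl | hψ'
    · exact hχ
    · exact List.mem_cons_of_mem _ (iha hψ' hχ)
  | rhd a b iha ihb =>
    intro ψ χ hψ hχ
    rcases List.mem_cons.1 hψ with rfl | hψ'
    · exact hχ
    · rcases List.mem_append.1 hψ' with h | h
      · exact List.mem_cons_of_mem _ (List.mem_append_left _ (iha h hχ))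
      · exact List.mem_cons_of_mem _ (List.mem_append_right _ (ihb h hχ))

theorem subf_impl_left {a b : Formula} : a ∈ subf (a.impl b) :=
  List.mem_cons_of_mem _ (List.mem_append_left _ (subf_self a))

theorem subf_impl_right {a b : Formula} : b ∈ subf (a.impl b) :=
  List.mem_cons_of_mem _ (List.mem_append_right _ (subf_self b))

theorem subf_box {a : Formula} : a ∈ subf (Formula.box a) :=
  List.mem_cons_of_mem _ (subf_self a)

theorem subf_rhd_left {a b : Formula} : a ∈ subf (Formula.rhd a b) :=
  List.mem_cons_of_mem _ (List.mem_append_left _ (subf_self a))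

theorem subf_rhd_right {a b : Formula} : b ∈ subf (Formula.rhd a b) :=
  List.mem_cons_of_mem _ (List.mem_append_right _ (subf_self b))

theorem subf_dia {a : Formula} : a ∈ subf (Formula.dia a) :=
  subf_trans (subf_impl_left) (subf_trans subf_box subf_impl_left)

theorem mem_subf_foldr_conj {L : List Formula} {ψ : Formula} (h : ψ ∈ L) :
    ψ ∈ subf (L.foldr Formula.conj Formula.top) := by
  induction L with
  | nil => cases h
  | cons a L ih =>
    rcases List.mem_cons.1 h with rfl | h'
    · -- conj a rest = neg (impl a (neg rest)) = impl (impl a (impl rest bot)) bot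
      exact subf_trans subf_impl_left subf_impl_left
    · exact subf_trans subf_impl_left
        (subf_trans subf_impl_right (subf_trans subf_impl_left (ih h')))

/-! ### Dfin builder -/

def mkDfin : List Formula → List Formula
  | [] => []
  | (.box a) :: l => Formula.box a :: mkDfin l
  | (.rhd a _) :: l => Formula.box a.neg :: mkDfin l
  | _ :: l => mkDfin l

theorem mkDfin_shape : ∀ l : List Formula, ∀ f ∈ mkDfin l, ∃ a, f = Formula.box a := by
  intro l
  induction l with
  | nil => intro f hf; cases hf
  | cons x l ih =>
    intro f hf
    cases x with
    | box a =>
      rcases List.mem_cons.1 hf with rfl | h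
      · exact ⟨a, rfl⟩
      · exact ih f h
    | rhd a b =>
      rcases List.mem_cons.1 hf with rfl | h
      · exact ⟨a.neg, rfl⟩
      · exact ih f h
    | bot => exact ih f hf
    | var n => exact ih f hf
    | impl a b => exact ih f hf

theorem mkDfin_box : ∀ {l : List Formula} {a : Formula},
    Formula.box a ∈ l → Formula.box a ∈ mkDfin l := by
  intro l
  induction l with
  | nil => intro a h; cases h
  | cons x l ih =>
    intro a h
    rcases List.mem_cons.1 h with rfl | h'
    · exact List.mem_cons_self
    · cases x with
      | box c => exact List.mem_cons_of_mem _ (ih h')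
      | rhd c d => exact List.mem_cons_of_mem _ (ih h')
      | bot => exact ih h'
      | var n => exact ih h'
      | impl c d => exact ih h'

theorem mkDfin_rhd : ∀ {l : List Formula} {a b : Formula},
    Formula.rhd a b ∈ l → Formula.box a.neg ∈ mkDfin l := by
  intro l
  induction l with
  | nil => intro a b h; cases h
  | cons x l ih =>
    intro a b h
    rcases List.mem_cons.1 h with rfl | h'
    · exact List.mem_cons_self
    · cases x with
      | box c => exact List.mem_cons_of_mem _ (ih h')
      | rhd c d => exact List.mem_cons_of_mem _ (ih h')
      | bot => exact ih h'
      | var n => exact ih h'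
      | impl c d => exact ih h'
/-! ### Main theorem -/

theorem singleton_consistent {φ : Formula} (h : ¬ Pr φ.neg) :
    Consistent Mschema {φ} := by
  rintro ⟨L, hL, hd⟩
  apply h
  have hd' : Dv [φ] Formula.bot := by
    refine Dv.mono (fun ψ hψ => ?_) hd
    have := hL ψ hψ
    simp at this
    simp [this]
  exact hd'

theorem neg_singleton_consistent {φ : Formula} (h : ¬ Pr φ) :
    Consistent Mschema {φ.neg} := by
  rintro ⟨L, hL, hd⟩
  apply h
  have hd' : Dv [φ.neg] Formula.bot := by
    refine Dv.mono (fun ψ hψ => ?_) hd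
    have := hL ψ hψ
    simp at this
    simp [this]
  exact (ILProof.dne φ).mp (hd' : Pr (φ.neg.impl Formula.bot))

theorem ilm_dia_premises' (As : List Formula) (A B : Formula)
    (h : ∀ Ai ∈ As, ¬ ILMProvable Ai.neg) :
    ILMProvable (((As.map Formula.dia).foldr Formula.conj Formula.top).impl
        (Formula.rhd A B)) ↔
      ILMProvable (Formula.rhd A B) := by
  constructor
  · -- hard direction
    intro hprov
    by_contra hnab
    classical
    -- the target formula and its subformula closure
    set Φ : Formula := ((As.map Formula.dia).foldr Formula.conj Formula.top).impl
      (Formula.rhd A B) with hΦ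
    set Dfin : List Formula := mkDfin (subf Φ) with hDfin
    have hshape := mkDfin_shape (subf Φ)
    set D : Set Formula := {x | x ∈ subf Φ} with hD
    have hclo_impl : ∀ {a b : Formula}, a.impl b ∈ D → a ∈ D ∧ b ∈ D :=
      fun hab => ⟨subf_trans hab subf_impl_left, subf_trans hab subf_impl_right⟩
    have hclo_box : ∀ {a : Formula}, Formula.box a ∈ D → a ∈ D :=
      fun ha => subf_trans ha subf_box
    have hclo_rhd : ∀ {a b : Formula}, Formula.rhd a b ∈ D → a ∈ D ∧ b ∈ D :=
      fun hab => ⟨subf_trans hab subf_rhd_left, subf_trans hab subf_rhd_right⟩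
    have hDbox : ∀ {a : Formula}, Formula.box a ∈ D → Formula.box a ∈ Dfin :=
      fun ha => mkDfin_box ha
    have hDrhd : ∀ {a b : Formula}, Formula.rhd a b ∈ D → Formula.box a.neg ∈ Dfin :=
      fun hab => mkDfin_rhd hab
    have TL := truth_lemma Dfin hshape D @hclo_impl @hclo_box @hclo_rhd @hDbox @hDrhd
    -- root MCS
    obtain ⟨Γ0, hΓ0sub, hΓ0⟩ := lindenbaum (neg_singleton_consistent hnab)
    have hnegmem : (Formula.rhd A B).neg ∈ Γ0 := hΓ0sub rfl
    have hABnot : Formula.rhd A B ∉ Γ0 := fun hmem => hΓ0.not_both hmem hnegmem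
    -- piece worlds
    have hex : ∀ k : ℕ, ∃ w : World, ∀ hk : k < As.length, As[k] ∈ w.1 := by
      intro k
      by_cases hk : k < As.length
      · obtain ⟨Δ, hΔsub, hΔ⟩ := lindenbaum (singleton_consistent
          (h As[k] (As.getElem_mem hk)))
        exact ⟨⟨Δ, hΔ⟩, fun _ => hΔsub rfl⟩
      · exact ⟨⟨Γ0, hΓ0⟩, fun hk' => absurd hk' hk⟩
    choose GF hGF using hex
    set G : ℕ → World := fun n => match n with
      | 0 => ⟨Γ0, hΓ0⟩
      | Nat.succ k => GF k with hG
    set M : GVModel := GM Dfin hshape G with hM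
    have hsatΦ : M.sat none Φ := soundness hprov M none
    -- premise satisfied at root
    have hpre : M.sat none ((As.map Formula.dia).foldr Formula.conj Formula.top) := by
      apply sat_foldr_conj
      intro ψ hψ
      obtain ⟨Ai, hAi, rfl⟩ := List.mem_map.1 hψ
      obtain ⟨k, hk, rfl⟩ := List.mem_iff_getElem.1 hAi
      apply (M.sat_dia _ _).2
      refine ⟨some (k+1, GF k), ?_, ?_⟩
      · show rootSee Dfin G (k+1) (GF k)
        exact Or.inl rfl
      · have hAImem : As[k] ∈ (GF k).1 := hGF k hk
        have hAiD : As[k] ∈ D := by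
          have h1 : Formula.dia As[k] ∈ subf Φ := by
            refine subf_trans (subf_impl_left (a := _) (b := Formula.rhd A B)) ?_
            exact mem_subf_foldr_conj (List.mem_map.2 ⟨As[k], As.getElem_mem hk, rfl⟩)
          exact subf_trans h1 subf_dia
        exact (piece_sat Dfin hshape G As[k] (k+1) (GF k)).2
          ((TL As[k] hAiD (GF k)).2 hAImem)
    have hsatAB : M.sat none (Formula.rhd A B) := hsatΦ hpre
    -- but A ▷ B fails at the root
    have hABD : Formula.rhd A B ∈ D := subf_impl_right
    have hAD : A ∈ D := (hclo_rhd hABD).1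
    have hBD : B ∈ D := (hclo_rhd hABD).2
    obtain ⟨u, hcRu, hcrit, hAu⟩ := exists_cR_crit Dfin hshape
      (w := ⟨Γ0, hΓ0⟩) (a := A) (b := B) (hDrhd hABD) hABnot
    have hgRu : gR Dfin G none (some (0, u)) := by
      show cR Dfin (G 0) u
      exact hcRu
    have hsatAu : M.sat (some (0, u)) A :=
      (piece_sat Dfin hshape G A 0 u).2 ((TL A hAD u).2 hAu)
    obtain ⟨Vs, hgS, hVb⟩ := hsatAB (some (0, u)) hgRu hsatAu
    obtain ⟨V, hcS, rfl⟩ := hgS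
    obtain ⟨Λ, hΛV, hΛcrit, _⟩ := hcS.2.2.2 B hcrit
    have hBB : Formula.rhd B B ∈ Γ0 := hΓ0.mem_of_prov (pr_rhd_self B)
    have hBneg : B.neg ∈ Λ.1 := (hΛcrit B hBB).1
    have hBnot : B ∉ Λ.1 := fun hmem => Λ.2.not_both hmem hBneg
    have hsatB : M.sat (some (0, Λ)) B := hVb (some (0, Λ)) (mem_img.2 ⟨Λ, hΛV, rfl⟩)
    exact hBnot ((TL B hBD Λ).1 ((piece_sat Dfin hshape G B 0 Λ).1 hsatB))
  · intro hab
    exact (ILProof.k1 (Formula.rhd A B)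
      ((As.map Formula.dia).foldr Formula.conj Formula.top)).mp hab

/-- if no ¬A_i is IL(M)-provable, then
IL(M) ⊢ ⋀ Diamond A_i → A ▷ B iff IL(M) ⊢ A ▷ B. -/
theorem ilm_dia_premises (As : List Formula) (A B : Formula)
    (h : ∀ Ai ∈ As, ¬ ILMProvable Ai.neg) :
    ILMProvable (((As.map Formula.dia).foldr Formula.conj Formula.top).impl
        (Formula.rhd A B)) ↔
      ILMProvable (Formula.rhd A B) :=
  ilm_dia_premises' As A B h
end

section
/- IL(M) proves A ∨ Diamond A if and only if IL(M) proves Box ⊥ → A. -/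
open Formula

namespace ILAux

variable {Ax : Set Formula}

/-- Identity: ⊢ φ → φ. -/
lemma thmI (φ : Formula) : ILProof Ax (φ.impl φ) :=
  ILProof.mp (ILProof.mp (ILProof.k2 φ (φ.impl φ) φ) (ILProof.k1 φ (φ.impl φ)))
    (ILProof.k1 φ φ)

/-- Lift: from ⊢ φ derive ⊢ γ → φ. -/
lemma lift {φ : Formula} (γ : Formula) (h : ILProof Ax φ) : ILProof Ax (γ.impl φ) :=
  ILProof.mp (ILProof.k1 φ γ) h

/-- Composition: from ⊢ φ→ψ and ⊢ ψ→χ derive ⊢ φ→χ. -/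
lemma comp {φ ψ χ : Formula} (h1 : ILProof Ax (φ.impl ψ)) (h2 : ILProof Ax (ψ.impl χ)) :
    ILProof Ax (φ.impl χ) :=
  ILProof.mp (ILProof.mp (ILProof.k2 φ ψ χ) (lift φ h2)) h1

/-- Assertion: from ⊢ φ derive ⊢ (φ→ψ) → ψ. -/
lemma assertion {φ : Formula} (ψ : Formula) (h : ILProof Ax φ) :
    ILProof Ax ((φ.impl ψ).impl ψ) :=
  ILProof.mp (ILProof.mp (ILProof.k2 (φ.impl ψ) φ ψ) (thmI (φ.impl ψ)))
    (lift (φ.impl ψ) h)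

/-- The B combinator: ⊢ (ψ→χ) → ((φ→ψ) → (φ→χ)). -/
lemma thmB (φ ψ χ : Formula) :
    ILProof Ax ((ψ.impl χ).impl ((φ.impl ψ).impl (φ.impl χ))) :=
  comp (ILProof.k1 (ψ.impl χ) φ) (ILProof.k2 φ ψ χ)

/-- From ⊢ φ→ψ derive ⊢ (ψ→χ) → (φ→χ). -/
lemma compLeft {φ ψ : Formula} (χ : Formula) (h : ILProof Ax (φ.impl ψ)) :
    ILProof Ax ((ψ.impl χ).impl (φ.impl χ)) :=
  comp (thmB φ ψ χ) (assertion (φ.impl χ) h)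

/-- Contraposition: from ⊢ φ→ψ derive ⊢ ¬ψ→¬φ. -/
lemma contrapose {φ ψ : Formula} (h : ILProof Ax (φ.impl ψ)) :
    ILProof Ax (ψ.neg.impl φ.neg) :=
  compLeft Formula.bot h

/-- Double negation introduction: ⊢ φ → ¬¬φ. -/
lemma dni (φ : Formula) : ILProof Ax (φ.impl φ.neg.neg) :=
  comp (ILProof.k1 φ (φ.impl Formula.bot))
    (ILProof.mp (ILProof.k2 (φ.impl Formula.bot) φ Formula.bot)
      (thmI (φ.impl Formula.bot)))

/-- Ex falso: ⊢ ⊥ → φ. -/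
lemma exFalso (φ : Formula) : ILProof Ax (Formula.bot.impl φ) :=
  comp (ILProof.k1 Formula.bot (φ.impl Formula.bot)) (ILProof.dne φ)

end ILAux

/-- IL(M) ⊢ A ∨ Diamond A iff IL(M) ⊢ Box ⊥ → A. -/
theorem ilm_disj_dia (A : Formula) :
    ILMProvable (A.disj A.dia) ↔ ILMProvable ((Formula.box Formula.bot).impl A) := by
  open ILAux in
  constructor
  · intro h
    -- h : ⊢ ¬A → ¬□¬A
    -- ⊢ □⊥ → □¬A
    have e2 : ILMProvable ((box bot).impl (box A.neg)) :=
      ILProof.mp (ILProof.L1 bot A.neg) (ILProof.nec (exFalso A.neg))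
    -- ⊢ □¬A → ¬¬□¬A → ¬¬A → A
    have e3 : ILMProvable ((box A.neg).impl A) :=
      comp (dni (box A.neg)) (comp (contrapose h) (ILProof.dne A))
    exact comp e2 e3
  · intro h
    -- h : ⊢ □⊥ → A
    -- ⊢ □¬A → □¬□⊥
    have c3 : ILMProvable ((box A.neg).impl (box (box bot).neg)) :=
      ILProof.mp (ILProof.L1 A.neg (box bot).neg) (ILProof.nec (contrapose h))
    -- ⊢ □¬□⊥ → □⊥ is an instance of L3
    have c4 : ILMProvable ((box (box bot).neg).impl (box bot)) := ILProof.L3 bot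
    -- ⊢ □¬A → A
    have c5 : ILMProvable ((box A.neg).impl A) := comp c3 (comp c4 h)
    exact contrapose c5
end

section
/- (Σ-lemma) Let L be any normal modal logic extending GL, and let φ be a formula that is not L-equivalent to any (possibly empty) disjunction of Box-formulas. Then there exist maximal L-consistent sets Δ_0 and Δ_1 such that φ ∈ Δ_0, Δ_0 ⊆_Box Δ_1 (every Box-formula in Δ_0 is in Δ_1), and ¬φ ∈ Δ_1. -/
/-- Formulas of basic modal (provability) logic. -/
inductive GF : Type
  | bot : GF
  | var : ℕ → GF
  | impl : GF → GF → GF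
  | box : GF → GF

namespace GF
def neg (φ : GF) : GF := φ.impl bot
def conj (φ ψ : GF) : GF := (φ.impl ψ.neg).neg
def disj (φ ψ : GF) : GF := φ.neg.impl ψ
def top : GF := neg bot
def dia (φ : GF) : GF := (box φ.neg).neg
def iff (φ ψ : GF) : GF := (φ.impl ψ).conj (ψ.impl φ)
end GF

/-- Hilbert-style provability in Gödel–Löb logic GL. -/
inductive GLProof : GF → Prop
  | k1 (φ ψ : GF) : GLProof (φ.impl (ψ.impl φ))
  | k2 (φ ψ χ : GF) : GLProof ((φ.impl (ψ.impl χ)).impl ((φ.impl ψ).impl (φ.impl χ)))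
  | dne (φ : GF) : GLProof ((φ.neg.neg).impl φ)
  | K (φ ψ : GF) : GLProof ((GF.box (φ.impl ψ)).impl ((GF.box φ).impl (GF.box ψ)))
  | loeb (φ : GF) : GLProof ((GF.box ((GF.box φ).impl φ)).impl (GF.box φ))
  | mp {φ ψ} : GLProof (φ.impl ψ) → GLProof φ → GLProof ψ
  | nec {φ} : GLProof φ → GLProof (GF.box φ)

/-- Disjunction Box C₁ ∨ … ∨ Box Cₙ of boxed formulas (empty disjunction is ⊥). -/
def bigDisjBox (Cs : List GF) : GF := (Cs.map GF.box).foldr GF.disj GF.bot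

/-- Consistency and maximal consistency relative to a logic L (a set of theorems). -/
def LConsistent (L : Set GF) (Γ : Set GF) : Prop :=
  ¬ ∃ lst : List GF, (∀ ψ ∈ lst, ψ ∈ Γ) ∧ (lst.foldr GF.impl GF.bot) ∈ L

def LMCS (L : Set GF) (Γ : Set GF) : Prop :=
  LConsistent L Γ ∧ ∀ φ : GF, φ ∈ Γ ∨ φ.neg ∈ Γ

def boxSubGF (Γ Δ : Set GF) : Prop := ∀ A : GF, GF.box A ∈ Γ → GF.box A ∈ Δ

namespace SigmaAux
set_option linter.unusedSectionVars false

/-- Derivability from hypotheses Γ over logic L. -/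
inductive Der (L Γ : Set GF) : GF → Prop
  | thm {φ} : φ ∈ L → Der L Γ φ
  | hyp {φ} : φ ∈ Γ → Der L Γ φ
  | mp {φ ψ} : Der L Γ (φ.impl ψ) → Der L Γ φ → Der L Γ ψ

theorem glp_id (a : GF) : GLProof (a.impl a) :=
  GLProof.mp (GLProof.mp (GLProof.k2 a (a.impl a) a) (GLProof.k1 a (a.impl a))) (GLProof.k1 a a)

theorem Der.mono {L Γ Γ' : Set GF} {ψ} (h : Γ ⊆ Γ') (hd : Der L Γ ψ) : Der L Γ' ψ := by
  induction hd with
  | thm h' => exact .thm h'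
  | hyp h' => exact .hyp (h h')
  | mp _ _ ih1 ih2 => exact .mp ih1 ih2

theorem derCut {L B Γ : Set GF} {ψ} (h : Der L B ψ) (hB : ∀ x ∈ B, Der L Γ x) : Der L Γ ψ := by
  induction h with
  | thm h => exact .thm h
  | hyp h => exact hB _ h
  | mp _ _ ih1 ih2 => exact .mp ih1 ih2

theorem listIntro {L Γ : Set GF} {ψ} : ∀ {l : List GF}, Der L Γ (l.foldr GF.impl ψ) →
    (∀ x ∈ l, Der L Γ x) → Der L Γ ψ
  | [], h, _ => h
  | x :: t, h, hall =>
      listIntro (Der.mp h (hall x (by simp))) (fun y hy => hall y (List.mem_cons_of_mem _ hy))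

variable {L : Set GF}
variable (hGL : ∀ φ : GF, GLProof φ → φ ∈ L)
variable (hmp : ∀ φ ψ : GF, (φ.impl ψ) ∈ L → φ ∈ L → ψ ∈ L)
include hGL hmp

theorem deduction {Γ : Set GF} {a b} (h : Der L (insert a Γ) b) : Der L Γ (a.impl b) := by
  induction h with
  | thm h' => exact .mp (.thm (hGL _ (GLProof.k1 _ _))) (.thm h')
  | @hyp c h' =>
      rcases h' with h' | h'
      · cases h'; exact .thm (hGL _ (glp_id _))
      · exact .mp (.thm (hGL _ (GLProof.k1 _ _))) (.hyp h')
  | mp _ _ ih1 ih2 => exact .mp (.mp (.thm (hGL _ (GLProof.k2 _ _ _))) ih1) ih2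

theorem derEmpty {ψ} (h : Der L ∅ ψ) : ψ ∈ L := by
  induction h with
  | thm h => exact h
  | hyp h => exact absurd h (Set.notMem_empty _)
  | mp _ _ ih1 ih2 => exact hmp _ _ ih1 ih2

theorem exch {x ψ : GF} : ∀ (t : List GF),
    Der L ∅ ((t.foldr GF.impl (x.impl ψ)).impl (x.impl (t.foldr GF.impl ψ)))
  | [] => .thm (hGL _ (glp_id _))
  | y :: s => by
      have ih := exch (x := x) (ψ := ψ) s
      apply deduction hGL hmp
      apply deduction hGL hmp
      apply deduction hGL hmp
      have hy0 : Der L (insert y (insert x (insert ((y :: s).foldr GF.impl (x.impl ψ)) ∅)))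
          (y.impl (s.foldr GF.impl (x.impl ψ))) := .hyp (by simp)
      have hh := Der.mp hy0 (.hyp (show y ∈ _ by simp))
      exact .mp (.mp (ih.mono (by simp)) hh) (.hyp (show x ∈ _ by simp))

theorem toChain {ψ : GF} : ∀ (l : List GF), Der L {x | x ∈ l} ψ → Der L ∅ (l.foldr GF.impl ψ)
  | [], h => h.mono (by intro y hy; simp at hy)
  | x :: t, h => by
      have h1 : Der L (insert x {y | y ∈ t}) ψ := h.mono (by intro y hy; simp at hy ⊢; tauto)
      have h2 := toChain t (deduction hGL hmp h1)
      exact .mp (exch hGL hmp t) h2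

theorem derOfList {Γ : Set GF} {ψ} (h : Der L Γ ψ) :
    ∃ l : List GF, (∀ x ∈ l, x ∈ Γ) ∧ Der L {x | x ∈ l} ψ := by
  clear hGL hmp
  induction h with
  | @thm c h => exact ⟨[], by simp, .thm h⟩
  | @hyp c h => exact ⟨[c], by simpa, .hyp (by simp)⟩
  | mp _ _ ih1 ih2 =>
      obtain ⟨l1, h1, d1⟩ := ih1
      obtain ⟨l2, h2, d2⟩ := ih2
      refine ⟨l1 ++ l2, ?_, .mp (d1.mono ?_) (d2.mono ?_)⟩
      · intro x hx; rcases List.mem_append.1 hx with hx | hx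
        exacts [h1 x hx, h2 x hx]
      · intro y hy; simp at hy ⊢; tauto
      · intro y hy; simp at hy ⊢; tauto

theorem consistent_iff {Γ : Set GF} : LConsistent L Γ ↔ ¬ Der L Γ GF.bot := by
  constructor
  · intro hc hd
    obtain ⟨l, hl, d⟩ := derOfList hGL hmp hd
    exact hc ⟨l, hl, derEmpty hGL hmp (toChain hGL hmp l d)⟩
  · intro hnd ⟨l, hl, hch⟩
    exact hnd (listIntro (.thm hch) (fun x hx => .hyp (hl x hx)))

theorem mcsClosed {Δ : Set GF} {ψ} (hΔ : LMCS L Δ) (h : Der L Δ ψ) : ψ ∈ Δ := by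
  rcases hΔ.2 ψ with hψ | hψ
  · exact hψ
  · exact absurd (Der.mp (.hyp hψ) h) ((consistent_iff hGL hmp).1 hΔ.1)

theorem chainFind {c : Set (Set GF)} (hchain : IsChain (· ⊆ ·) c) (hcne : c.Nonempty) :
    ∀ (l : List GF), (∀ x ∈ l, x ∈ ⋃₀ c) → ∃ D ∈ c, ∀ x ∈ l, x ∈ D := by
  intro l
  induction l with
  | nil => exact fun _ => ⟨hcne.choose, hcne.choose_spec, by simp⟩
  | cons x t ih =>
      intro hl
      obtain ⟨D1, hD1, hD1t⟩ := ih (fun y hy => hl y (List.mem_cons_of_mem _ hy))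
      obtain ⟨D2, hD2c, hxD2⟩ := hl x (List.mem_cons_self (a := x) (l := t))
      obtain ⟨D, hDc, hD1D, hD2D⟩ := hchain.directedOn D1 hD1 D2 hD2c
      refine ⟨D, hDc, ?_⟩
      intro y hy
      rcases List.mem_cons.1 hy with rfl | hy
      exacts [hD2D hxD2, hD1D (hD1t y hy)]

theorem lindenbaum {Γ : Set GF} (h : ¬ Der L Γ GF.bot) : ∃ Δ, Γ ⊆ Δ ∧ LMCS L Δ := by
  have hZ : ∀ c ⊆ {Δ : Set GF | ¬ Der L Δ GF.bot}, IsChain (· ⊆ ·) c → c.Nonempty →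
      ∃ ub ∈ {Δ : Set GF | ¬ Der L Δ GF.bot}, ∀ s ∈ c, s ⊆ ub := by
    intro c hcS hchain hcne
    refine ⟨⋃₀ c, ?_, fun s hs => Set.subset_sUnion_of_mem hs⟩
    intro hd
    obtain ⟨l, hl, d⟩ := derOfList hGL hmp hd
    obtain ⟨D, hDc, hlD⟩ := chainFind hGL hmp hchain hcne l hl
    exact hcS hDc (d.mono (fun y hy => hlD y hy))
  obtain ⟨m, hΓm, hm⟩ := zorn_subset_nonempty {Δ : Set GF | ¬ Der L Δ GF.bot} hZ Γ h
  refine ⟨m, hΓm, (consistent_iff hGL hmp).2 hm.prop, ?_⟩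
  intro ψ
  by_contra hcon
  push_neg at hcon
  obtain ⟨h1, h2⟩ := hcon
  have key : ∀ a : GF, a ∉ m → Der L m a.neg := by
    intro a ha
    have : Der L (insert a m) GF.bot := by
      by_contra hins
      exact ha (hm.2 hins (Set.subset_insert a m) (Set.mem_insert a m))
    exact deduction hGL hmp this
  have d1 := key ψ h1
  have d2 := key ψ.neg h2
  have dψ : Der L m ψ := .mp (.thm (hGL _ (GLProof.dne ψ))) d2
  exact hm.prop (.mp d1 dψ)

/-! Propositional toolkit -/

theorem t_efq (a : GF) : (GF.bot.impl a) ∈ L := by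
  apply derEmpty hGL hmp
  apply deduction hGL hmp
  refine .mp (.thm (hGL _ (GLProof.dne a))) ?_
  apply deduction hGL hmp
  exact .hyp (by simp)

theorem t_conj_intro (a b : GF) : (a.impl (b.impl (a.conj b))) ∈ L := by
  apply derEmpty hGL hmp
  apply deduction hGL hmp; apply deduction hGL hmp
  show Der L _ ((a.impl b.neg).impl GF.bot)
  apply deduction hGL hmp
  have hab : Der L (insert (a.impl b.neg) (insert b (insert a ∅))) (a.impl (b.impl GF.bot)) :=
    .hyp (by simp [GF.neg])
  exact .mp (.mp hab (.hyp (by simp))) (.hyp (by simp))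

theorem t_conj_left (a b : GF) : ((a.conj b).impl a) ∈ L := by
  apply derEmpty hGL hmp
  apply deduction hGL hmp
  refine .mp (.thm (hGL _ (GLProof.dne a))) ?_
  show Der L _ ((a.impl GF.bot).impl GF.bot)
  apply deduction hGL hmp
  have hc : Der L (insert (a.impl GF.bot) (insert (a.conj b) ∅)) ((a.impl b.neg).impl GF.bot) :=
    .hyp (by simp [GF.conj, GF.neg])
  refine .mp hc ?_
  apply deduction hGL hmp
  show Der L _ (b.impl GF.bot)
  apply deduction hGL hmp
  have hna : Der L (insert b (insert a (insert (a.impl GF.bot) (insert (a.conj b) ∅))))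
      (a.impl GF.bot) := .hyp (by simp)
  exact .mp hna (.hyp (by simp))

theorem t_conj_right (a b : GF) : ((a.conj b).impl b) ∈ L := by
  apply derEmpty hGL hmp
  apply deduction hGL hmp
  refine .mp (.thm (hGL _ (GLProof.dne b))) ?_
  show Der L _ ((b.impl GF.bot).impl GF.bot)
  apply deduction hGL hmp
  have hc : Der L (insert (b.impl GF.bot) (insert (a.conj b) ∅)) ((a.impl b.neg).impl GF.bot) :=
    .hyp (by simp [GF.conj, GF.neg])
  refine .mp hc ?_
  have hnb : Der L (insert (b.impl GF.bot) (insert (a.conj b) ∅)) b.neg := .hyp (by simp [GF.neg])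
  exact .mp (.thm (hGL _ (GLProof.k1 b.neg a))) hnb

theorem t_comp {a b c : GF} (h1 : (a.impl b) ∈ L) (h2 : (b.impl c) ∈ L) : (a.impl c) ∈ L := by
  apply derEmpty hGL hmp
  apply deduction hGL hmp
  exact .mp (.thm h2) (.mp (.thm h1) (.hyp (by simp)))

/-! Modal toolkit -/

variable (hnec : ∀ φ : GF, φ ∈ L → GF.box φ ∈ L)

include hnec in
theorem boxImp {a b : GF} (h : (a.impl b) ∈ L) : ((GF.box a).impl (GF.box b)) ∈ L :=
  hmp _ _ (hGL _ (GLProof.K a b)) (hnec _ h)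

theorem boxDistrib (c : GF) : ∀ (l : List GF),
    ((GF.box (l.foldr GF.impl c)).impl ((l.map GF.box).foldr GF.impl (GF.box c))) ∈ L
  | [] => hGL _ (glp_id _)
  | x :: t => by
      have ih := boxDistrib c t
      apply derEmpty hGL hmp
      apply deduction hGL hmp; apply deduction hGL hmp
      refine .mp (.thm ih) ?_
      refine .mp (.mp (.thm (hGL _ (GLProof.K x (t.foldr GF.impl c)))) (.hyp (by simp))) ?_
      exact .hyp (by simp)

/-! List conjunction -/

theorem conjElimMem {A : GF} {l : List GF} (hl : A ∈ l) :
    ((l.foldr GF.conj GF.top).impl A) ∈ L := by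
  induction l with
  | nil => simp at hl
  | cons x t ih =>
      rcases List.mem_cons.1 hl with rfl | hA
      · exact t_conj_left hGL hmp A _
      · exact t_comp hGL hmp (t_conj_right hGL hmp x _) (ih hA)

theorem conjIntroList {Γ : Set GF} : ∀ {l : List GF}, (∀ A ∈ l, Der L Γ A) →
    Der L Γ (l.foldr GF.conj GF.top)
  | [], _ => .thm (hGL _ (glp_id GF.bot))
  | x :: t, h => .mp (.mp (.thm (t_conj_intro hGL hmp x _)) (h x (by simp)))
      (conjIntroList (fun A hA => h A (List.mem_cons_of_mem _ hA)))



/-! Extraction of a disjunction of boxes -/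

theorem extract (φ : GF) : ∀ (l : List GF) (Γ : Set GF), φ ∈ Γ →
    (∀ x ∈ l, x = φ ∨ ∃ C, x = (GF.box C).neg ∧ ((GF.box C).impl φ) ∈ L) →
    Der L Γ (l.foldr GF.impl GF.bot) →
    ∃ Cs : List GF, (∀ C ∈ Cs, ((GF.box C).impl φ) ∈ L) ∧ Der L Γ (bigDisjBox Cs)
  | [], Γ, _, _, hd => ⟨[], by simp, hd⟩
  | x :: t, Γ, hφΓ, hall, hd => by
      rcases hall x (by simp) with rfl | ⟨C, rfl, hC⟩
      · have hd' : Der L Γ (t.foldr GF.impl GF.bot) := .mp hd (.hyp hφΓ)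
        exact extract x t Γ hφΓ (fun y hy => hall y (List.mem_cons_of_mem _ hy)) hd'
      · have hd' : Der L (insert (GF.box C).neg Γ) (t.foldr GF.impl GF.bot) :=
          .mp (hd.mono (Set.subset_insert _ _)) (.hyp (Set.mem_insert _ _))
        obtain ⟨Cs, hCs, dCs⟩ := extract φ t (insert (GF.box C).neg Γ)
          (Set.mem_insert_of_mem _ hφΓ) (fun y hy => hall y (List.mem_cons_of_mem _ hy)) hd'
        refine ⟨C :: Cs, ?_, ?_⟩
        · intro C' hC'
          rcases List.mem_cons.1 hC' with rfl | hmem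
          exacts [hC, hCs C' hmem]
        · show Der L Γ ((GF.box C).neg.impl (bigDisjBox Cs))
          exact deduction hGL hmp dCs

theorem disjElim (φ : GF) : ∀ (Cs : List GF), (∀ C ∈ Cs, ((GF.box C).impl φ) ∈ L) →
    ((bigDisjBox Cs).impl φ) ∈ L
  | [], _ => t_efq hGL hmp φ
  | C :: Cs, h => by
      have ih := disjElim φ Cs (fun C' h' => h C' (List.mem_cons_of_mem _ h'))
      have hC := h C (by simp)
      apply derEmpty hGL hmp
      apply deduction hGL hmp
      refine .mp (.thm (hGL _ (GLProof.dne φ))) ?_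
      show Der L _ ((φ.impl GF.bot).impl GF.bot)
      apply deduction hGL hmp
      have hnb : Der L (insert (φ.impl GF.bot) (insert (bigDisjBox (C :: Cs)) ∅))
          ((GF.box C).impl GF.bot) := by
        apply deduction hGL hmp
        exact .mp (.hyp (by simp)) (.mp (.thm hC) (.hyp (by simp)))
      have hbig : Der L (insert (φ.impl GF.bot) (insert (bigDisjBox (C :: Cs)) ∅))
          (((GF.box C).impl GF.bot).impl (bigDisjBox Cs)) :=
        .hyp (by simp [bigDisjBox, GF.disj, GF.neg])
      exact .mp (.hyp (show φ.impl GF.bot ∈ _ by simp)) (.mp (.thm ih) (.mp hbig hnb))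

end SigmaAux

namespace SigmaAux
def unbox : GF → Option GF
  | GF.box A => some A
  | _ => none

theorem unbox_eq {x A : GF} : unbox x = some A ↔ x = GF.box A := by
  cases x <;> simp [unbox]
end SigmaAux

open SigmaAux in
theorem sigma_lemma' (L : Set GF)
    (hGL : ∀ φ : GF, GLProof φ → φ ∈ L)
    (hmp : ∀ φ ψ : GF, (φ.impl ψ) ∈ L → φ ∈ L → ψ ∈ L)
    (hnec : ∀ φ : GF, φ ∈ L → GF.box φ ∈ L)
    (φ : GF)
    (hφ : ¬ ∃ Cs : List GF, (φ.iff (bigDisjBox Cs)) ∈ L) :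
    ∃ Δ₀ Δ₁ : Set GF, LMCS L Δ₀ ∧ LMCS L Δ₁ ∧
      φ ∈ Δ₀ ∧ boxSubGF Δ₀ Δ₁ ∧ φ.neg ∈ Δ₁ := by
  classical
  set Γ0 : Set GF := insert φ {x | ∃ C, x = (GF.box C).neg ∧ ((GF.box C).impl φ) ∈ L} with hΓ0
  by_cases hcon : Der L Γ0 GF.bot
  · exfalso
    obtain ⟨l, hl, d⟩ := derOfList hGL hmp hcon
    have d1 : Der L (insert φ ∅) (l.foldr GF.impl GF.bot) :=
      (toChain hGL hmp l d).mono (Set.empty_subset _)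
    obtain ⟨Cs, hCs, dbig⟩ := extract hGL hmp φ l (insert φ ∅) (Set.mem_insert _ _)
      (by
        intro x hx
        rcases hl x hx with h | ⟨C, hC1, hC2⟩
        · exact Or.inl h
        · exact Or.inr ⟨C, hC1, hC2⟩) d1
    have h1 : (φ.impl (bigDisjBox Cs)) ∈ L := derEmpty hGL hmp (deduction hGL hmp dbig)
    have h2 : ((bigDisjBox Cs).impl φ) ∈ L := disjElim hGL hmp φ Cs hCs
    exact hφ ⟨Cs, hmp _ _ (hmp _ _ (t_conj_intro hGL hmp _ _) h1) h2⟩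
  · obtain ⟨Δ0, hsub0, hmcs0⟩ := lindenbaum hGL hmp hcon
    set Γ1 : Set GF := insert φ.neg {x | ∃ A, x = GF.box A ∧ GF.box A ∈ Δ0} with hΓ1
    have hcon1 : ¬ Der L Γ1 GF.bot := by
      intro hd
      obtain ⟨l, hl, d⟩ := derOfList hGL hmp hd
      set bs : List GF := l.filterMap unbox with hbs
      have hbsΔ0 : ∀ A ∈ bs, GF.box A ∈ Δ0 := by
        intro A hA
        obtain ⟨x, hxl, hux⟩ := List.mem_filterMap.1 hA
        rw [unbox_eq] at hux
        subst hux
        rcases hl _ hxl with h | ⟨A', hA', hA'Δ0⟩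
        · exact absurd h (by simp [GF.neg])
        · cases hA'; exact hA'Δ0
      set B : Set GF := {x | ∃ A ∈ bs, x = GF.box A} with hB
      have d' : Der L (insert φ.neg B) GF.bot := by
        refine d.mono ?_
        intro x hx
        rcases hl x hx with h | ⟨A, hA, hAΔ0⟩
        · exact Or.inl h
        · right
          refine ⟨A, List.mem_filterMap.2 ⟨x, hx, by rw [unbox_eq]; exact hA⟩, hA⟩
      have dφ : Der L B φ := .mp (.thm (hGL _ (GLProof.dne φ))) (deduction hGL hmp d')
      set C0 : GF := bs.foldr GF.conj GF.top with hC0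
      have hboxC0φ : ((GF.box C0).impl φ) ∈ L := by
        apply derEmpty hGL hmp
        apply deduction hGL hmp
        refine derCut dφ ?_
        rintro x ⟨A, hA, rfl⟩
        exact .mp (.thm (boxImp hGL hmp hnec (conjElimMem hGL hmp hA)))
          (.hyp (Set.mem_insert _ _))
      have hnegΔ0 : (GF.box C0).neg ∈ Δ0 :=
        hsub0 (Set.mem_insert_of_mem _ ⟨C0, rfl, hboxC0φ⟩)
      have hboxΔ0 : GF.box C0 ∈ Δ0 := by
        apply mcsClosed hGL hmp hmcs0
        have hchainC0 : ((bs.map GF.box).foldr GF.impl (GF.box C0)) ∈ L := by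
          refine hmp _ _ (boxDistrib hGL hmp C0 bs) (hnec _ ?_)
          exact derEmpty hGL hmp (toChain hGL hmp bs
            (conjIntroList hGL hmp (fun A hA => .hyp hA)))
        refine listIntro (.thm hchainC0) ?_
        intro x hx
        obtain ⟨A, hA, rfl⟩ := List.mem_map.1 hx
        exact .hyp (hbsΔ0 A hA)
      have : Der L Δ0 GF.bot :=
        .mp (show Der L Δ0 ((GF.box C0).impl GF.bot) from .hyp hnegΔ0) (.hyp hboxΔ0)
      exact (consistent_iff hGL hmp).1 hmcs0.1 this
    obtain ⟨Δ1, hsub1, hmcs1⟩ := lindenbaum hGL hmp hcon1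
    refine ⟨Δ0, Δ1, hmcs0, hmcs1, hsub0 (Set.mem_insert _ _), ?_, hsub1 (Set.mem_insert _ _)⟩
    intro A hA
    exact hsub1 (Set.mem_insert_of_mem _ ⟨A, rfl, hA⟩)


/-- Σ-lemma: for any normal modal logic L extending GL, if φ is
not L-equivalent to a disjunction of Box-formulas, then there are maximal
L-consistent sets Δ₀, Δ₁ with φ ∈ Δ₀ ⊆_Box Δ₁ ∋ ¬φ. -/
theorem sigma_lemma (L : Set GF)
    (hGL : ∀ φ : GF, GLProof φ → φ ∈ L)
    (hmp : ∀ φ ψ : GF, (φ.impl ψ) ∈ L → φ ∈ L → ψ ∈ L)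
    (hnec : ∀ φ : GF, φ ∈ L → GF.box φ ∈ L)
    (φ : GF)
    (hφ : ¬ ∃ Cs : List GF, (φ.iff (bigDisjBox Cs)) ∈ L) :
    ∃ Δ₀ Δ₁ : Set GF, LMCS L Δ₀ ∧ LMCS L Δ₁ ∧
      φ ∈ Δ₀ ∧ boxSubGF Δ₀ Δ₁ ∧ φ.neg ∈ Δ₁ :=
  sigma_lemma' L hGL hmp hnec φ hφ
end

section
/- In GL: there is a (possibly empty) disjunction ⋁_i Box C_i such that GL ⊢ (φ ∧ Box ¬φ) ↔ ⋁_i Box C_i, if and only if GL ⊢ Box ⊥ → φ or GL ⊢ ¬φ. Moreover, in the first case GL ⊢ (φ ∧ Box ¬φ) ↔ Box ⊥, and in the second GL ⊢ (φ ∧ Box ¬φ) ↔ ⊥. -/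
/-- Derivability from a list of hypotheses (necessitation only from no hypotheses). -/
inductive Der : List GF → GF → Prop
  | hyp {Γ φ} : φ ∈ Γ → Der Γ φ
  | k1 (Γ) (φ ψ : GF) : Der Γ (φ.impl (ψ.impl φ))
  | k2 (Γ) (φ ψ χ : GF) : Der Γ ((φ.impl (ψ.impl χ)).impl ((φ.impl ψ).impl (φ.impl χ)))
  | dne (Γ) (φ : GF) : Der Γ ((φ.neg.neg).impl φ)
  | K (Γ) (φ ψ : GF) : Der Γ ((GF.box (φ.impl ψ)).impl ((GF.box φ).impl (GF.box ψ)))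
  | loeb (Γ) (φ : GF) : Der Γ ((GF.box ((GF.box φ).impl φ)).impl (GF.box φ))
  | mp {Γ φ ψ} : Der Γ (φ.impl ψ) → Der Γ φ → Der Γ ψ
  | nec {Γ φ} : Der [] φ → Der Γ (GF.box φ)

namespace Der

theorem wk {Γ Γ' : List GF} {φ} (h : Der Γ φ) (s : Γ ⊆ Γ') : Der Γ' φ := by
  induction h generalizing Γ' with
  | hyp m => exact .hyp (s m)
  | k1 => exact .k1 _ _ _
  | k2 => exact .k2 _ _ _ _
  | dne => exact .dne _ _
  | K => exact .K _ _ _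
  | loeb => exact .loeb _ _
  | mp _ _ ih1 ih2 => exact .mp (ih1 s) (ih2 s)
  | nec h => exact .nec h

theorem w1 {Γ : List GF} {φ A : GF} (h : Der Γ φ) : Der (A :: Γ) φ :=
  h.wk (fun _ hm => List.mem_cons_of_mem _ hm)

theorem h0 {Γ : List GF} {A : GF} : Der (A :: Γ) A := .hyp (List.Mem.head _)
theorem h1 {Γ : List GF} {A B : GF} : Der (A :: B :: Γ) B := .hyp (List.Mem.tail _ (List.Mem.head _))
theorem h2 {Γ : List GF} {A B C : GF} : Der (A :: B :: C :: Γ) C :=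
  .hyp (List.Mem.tail _ (List.Mem.tail _ (List.Mem.head _)))

theorem id {Γ : List GF} {A : GF} : Der Γ (A.impl A) :=
  .mp (.mp (.k2 _ A (A.impl A) A) (.k1 _ A (A.impl A))) (.k1 _ A A)

private theorem ded' {Δ : List GF} {B} (h : Der Δ B) :
    ∀ A Γ, Δ = A :: Γ → Der Γ (A.impl B) := by
  induction h with
  | @hyp Γ' φ m =>
    intro A Γ hEq; subst hEq
    cases m with
    | head => exact Der.id
    | tail _ m => exact .mp (.k1 _ _ _) (.hyp m)
  | k1 => intro A Γ _; exact .mp (.k1 _ _ _) (.k1 _ _ _)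
  | k2 => intro A Γ _; exact .mp (.k1 _ _ _) (.k2 _ _ _ _)
  | dne => intro A Γ _; exact .mp (.k1 _ _ _) (.dne _ _)
  | K => intro A Γ _; exact .mp (.k1 _ _ _) (.K _ _ _)
  | loeb => intro A Γ _; exact .mp (.k1 _ _ _) (.loeb _ _)
  | mp _ _ ih1 ih2 =>
    intro A Γ hEq
    exact .mp (.mp (.k2 _ _ _ _) (ih1 A Γ hEq)) (ih2 A Γ hEq)
  | nec h => intro A Γ _; exact .mp (.k1 _ _ _) (.nec h)

theorem ded {Γ : List GF} {A B : GF} (h : Der (A :: Γ) B) : Der Γ (A.impl B) :=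
  ded' h A Γ rfl

private theorem toGL' {Γ : List GF} {φ} (h : Der Γ φ) : Γ = [] → GLProof φ := by
  induction h with
  | hyp m => intro hEq; subst hEq; simp at m
  | k1 => intro _; exact .k1 _ _
  | k2 => intro _; exact .k2 _ _ _
  | dne => intro _; exact .dne _
  | K => intro _; exact .K _ _
  | loeb => intro _; exact .loeb _
  | mp _ _ ih1 ih2 => intro hEq; exact .mp (ih1 hEq) (ih2 hEq)
  | nec _ ih => intro _; exact .nec (ih rfl)

theorem toGL {φ} (h : Der [] φ) : GLProof φ := toGL' h rfl

theorem ofGL {φ} (h : GLProof φ) : Der [] φ := by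
  induction h with
  | k1 => exact .k1 _ _ _
  | k2 => exact .k2 _ _ _ _
  | dne => exact .dne _ _
  | K => exact .K _ _ _
  | loeb => exact .loeb _ _
  | mp _ _ ih1 ih2 => exact .mp ih1 ih2
  | nec _ ih => exact .nec ih

/- propositional toolkit -/

theorem trans {Γ : List GF} {A B C : GF} (hab : Der Γ (A.impl B)) (hbc : Der Γ (B.impl C)) :
    Der Γ (A.impl C) :=
  ded (.mp hbc.w1 (.mp hab.w1 h0))

theorem exfalso {Γ : List GF} {A : GF} : Der Γ (GF.bot.impl A) :=
  trans (.k1 _ GF.bot A.neg) (.dne _ A)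

theorem byContra {Γ : List GF} {A : GF} (h : Der (A.neg :: Γ) GF.bot) : Der Γ A :=
  .mp (.dne _ A) h.ded

theorem conj_elim1 {Γ : List GF} {A B : GF} : Der Γ ((A.conj B).impl A) :=
  ded (byContra (.mp h1 (ded (ded (.mp h2 h1)))))

theorem conj_elim2 {Γ : List GF} {A B : GF} : Der Γ ((A.conj B).impl B) :=
  ded (byContra (.mp h1 (.mp (.k1 _ B.neg A) h0)))

theorem conj_intro {Γ : List GF} {A B : GF} : Der Γ (A.impl (B.impl (A.conj B))) :=
  ded (ded (ded (.mp (.mp h0 h2) h1)))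

theorem inl {Γ : List GF} {A B : GF} : Der Γ (A.impl (A.disj B)) :=
  ded (ded (.mp exfalso (.mp h0 h1)))

theorem contrapos {Γ : List GF} {A B : GF} (h : Der Γ (A.impl B)) : Der Γ (B.neg.impl A.neg) :=
  ded (ded (.mp h1 (.mp h.w1.w1 h0)))

theorem dni {Γ : List GF} {A : GF} : Der Γ (A.impl A.neg.neg) :=
  ded (ded (.mp h0 h1))

theorem swap {Γ : List GF} {A B C : GF} (h : Der Γ (A.impl (B.impl C))) :
    Der Γ (B.impl (A.impl C)) :=
  ded (ded (.mp (.mp h.w1.w1 h0) h1))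

theorem conj_intro_imp {Γ : List GF} {X A B : GF} (hA : Der Γ (X.impl A)) (hB : Der Γ (X.impl B)) :
    Der Γ (X.impl (A.conj B)) :=
  ded (.mp (.mp conj_intro (.mp hA.w1 h0)) (.mp hB.w1 h0))

theorem box_mono {Γ : List GF} {A B : GF} (h : Der [] (A.impl B)) :
    Der Γ ((GF.box A).impl (GF.box B)) :=
  .mp (.K _ _ _) (.nec h)

theorem iff_mp {Γ : List GF} {A B : GF} (h : Der Γ (A.iff B)) : Der Γ (A.impl B) :=
  .mp conj_elim1 h

theorem iff_mpr {Γ : List GF} {A B : GF} (h : Der Γ (A.iff B)) : Der Γ (B.impl A) :=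
  .mp conj_elim2 h

theorem iff_intro {Γ : List GF} {A B : GF} (h1 : Der Γ (A.impl B)) (h2 : Der Γ (B.impl A)) :
    Der Γ (A.iff B) :=
  .mp (.mp conj_intro h1) h2

end Der


open Der

/-- φ ∧ Box ¬φ is GL-equivalent to a disjunction of Box-formulas
iff GL ⊢ Box ⊥ → φ or GL ⊢ ¬φ; moreover in the first case the equivalent is
Box ⊥ and in the second it is ⊥. -/
theorem gl_phi_and_box_neg_phi (φ : GF) :
    ((∃ Cs : List GF, GLProof ((φ.conj (GF.box φ.neg)).iff (bigDisjBox Cs))) ↔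
      (GLProof ((GF.box GF.bot).impl φ) ∨ GLProof φ.neg)) ∧
    (GLProof ((GF.box GF.bot).impl φ) →
      GLProof ((φ.conj (GF.box φ.neg)).iff (GF.box GF.bot))) ∧
    (GLProof φ.neg → GLProof ((φ.conj (GF.box φ.neg)).iff GF.bot)) := by
  -- the two "moreover" parts first
  have part2 : GLProof ((GF.box GF.bot).impl φ) →
      GLProof ((φ.conj (GF.box φ.neg)).iff (GF.box GF.bot)) := by
    intro h
    have h' : Der [] ((GF.box GF.bot).impl φ) := ofGL h
    have fwd : Der [] ((φ.conj (GF.box φ.neg)).impl (GF.box GF.bot)) :=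
      Der.trans conj_elim2 (Der.trans (box_mono (contrapos h')) (.loeb [] GF.bot))
    have bwd : Der [] ((GF.box GF.bot).impl (φ.conj (GF.box φ.neg))) :=
      conj_intro_imp h' (box_mono Der.exfalso)
    exact toGL (iff_intro fwd bwd)
  have part3 : GLProof φ.neg → GLProof ((φ.conj (GF.box φ.neg)).iff GF.bot) := by
    intro h
    exact toGL (iff_intro (Der.trans conj_elim1 (ofGL h)) Der.exfalso)
  refine ⟨⟨?_, ?_⟩, part2, part3⟩
  · rintro ⟨Cs, hiff⟩
    have hD := ofGL hiff
    cases Cs with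
    | nil =>
      right
      have h1 : Der [] ((φ.conj (GF.box φ.neg)).impl GF.bot) := iff_mp hD
      have hX : Der [] (φ.impl (GF.box φ.neg).neg) :=
        .mp (.dne [] (φ.impl (GF.box φ.neg).neg)) h1
      have hswap : Der [] ((GF.box φ.neg).impl φ.neg) := swap hX
      have hbox : Der [] (GF.box φ.neg) := .mp (.loeb [] φ.neg) (.nec hswap)
      exact toGL (.mp hswap hbox)
    | cons C cs =>
      left
      have s1 : Der [] ((GF.box GF.bot).impl (GF.box C)) := box_mono Der.exfalso
      have s2 : Der [] ((GF.box C).impl (bigDisjBox (C :: cs))) := inl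
      have s3 : Der [] ((bigDisjBox (C :: cs)).impl (φ.conj (GF.box φ.neg))) := iff_mpr hD
      exact toGL (Der.trans s1 (Der.trans s2 (Der.trans s3 conj_elim1)))
  · rintro (h | h)
    · refine ⟨[GF.bot], ?_⟩
      have p2 := ofGL (part2 h)
      have fwd : Der [] ((φ.conj (GF.box φ.neg)).impl (bigDisjBox [GF.bot])) :=
        Der.trans (iff_mp p2) dni
      have bwd : Der [] ((bigDisjBox [GF.bot]).impl (φ.conj (GF.box φ.neg))) :=
        Der.trans (.dne [] (GF.box GF.bot)) (iff_mpr p2)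
      exact toGL (iff_intro fwd bwd)
    · exact ⟨[], part3 h⟩
end
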